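/- arXiv:0904.0068 — 7 statements merged into one kernel-verified Lean document; each statement's English description precedes it below -/
import Mathlib

section
/- Let A be an m×n real matrix and s ≥ 1 an integer. If A is s-semigood, then for every subset J of {1,…,n} with Card(J) ≤ s and every nonzero x in the kernel of A such that x_i ≤ 0 for all i ∈ P_+ ∖ J, one has Σ_{i∈J∩P_+} x_i + Σ_{i∈J∩P_n} |x_i| < Σ_{i∉J} |x_i|. -/
open Finset

noncomputable def normS1 {n : ℕ} (s : ℕ) (x : Fin n → ℝ) : ℝ :=
  (Finset.univ.powerset.filter (fun J : Finset (Fin n) => J.card ≤ s)).sup'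
    ⟨∅, by simp⟩ (fun J => ∑ i ∈ J, |x i|)

noncomputable def dualNorm {m : ℕ} (N : (Fin m → ℝ) → ℝ) (v : Fin m → ℝ) : ℝ :=
  sSup {r : ℝ | ∃ x : Fin m → ℝ, N x ≤ 1 ∧ r = ∑ k, v k * x k}

def IsNorm {m : ℕ} (N : (Fin m → ℝ) → ℝ) : Prop :=
  (∀ x y, N (x + y) ≤ N x + N y) ∧ (∀ (c : ℝ) (x), N (c • x) = |c| * N x) ∧
  (∀ x, N x = 0 → x = 0)

def SemiGood {m n : ℕ} (A : Matrix (Fin m) (Fin n) ℝ) (Pplus : Finset (Fin n)) (s : ℕ) : Prop :=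
  ∀ w : Fin n → ℝ,
    (Finset.univ.filter (fun i => w i ≠ 0)).card ≤ s →
    (∀ i ∈ Pplus, 0 ≤ w i) →
    ∀ z : Fin n → ℝ, A.mulVec z = A.mulVec w → (∀ i ∈ Pplus, 0 ≤ z i) →
      (∑ i, |z i|) ≤ (∑ i, |w i|) → z = w

def SGCond {m n : ℕ} (A : Matrix (Fin m) (Fin n) ℝ) (Pplus : Finset (Fin n))
    (s : ℕ) (ξ θ : ℝ) : Prop :=
  ∀ x : Fin n → ℝ, A.mulVec x = 0 → ∀ J : Finset (Fin n), J.card ≤ s →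
    ∑ i ∈ J ∩ Pplus, x i + ∑ i ∈ J ∩ Pplusᶜ, |x i| ≤
      ξ * (∑ i ∈ Pplusᶜ \ J, |x i| + ∑ i ∈ Pplus \ J, max (-x i) (θ * x i))

def SGbCond {m n : ℕ} (A : Matrix (Fin m) (Fin n) ℝ) (Pplus : Finset (Fin n))
    (s : ℕ) (ξ θ β : ℝ) (N : (Fin m → ℝ) → ℝ) : Prop :=
  ∀ x : Fin n → ℝ, ∀ J : Finset (Fin n), J.card ≤ s →
    ∑ i ∈ J ∩ Pplus, x i + ∑ i ∈ J ∩ Pplusᶜ, |x i| ≤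
      β * N (A.mulVec x) +
        ξ * (∑ i ∈ Pplusᶜ \ J, |x i| + ∑ i ∈ Pplus \ J, max (-x i) (θ * x i))

def SGbCondSign {m n : ℕ} (A : Matrix (Fin m) (Fin n) ℝ) (Pplus : Finset (Fin n))
    (s : ℕ) (ξ β : ℝ) (N : (Fin m → ℝ) → ℝ) : Prop :=
  ∀ J : Finset (Fin n), J.card ≤ s →
    ∀ x : Fin n → ℝ, (∀ i ∈ Pplus \ J, x i ≤ 0) →
      ∑ i ∈ J ∩ Pplus, x i + ∑ i ∈ J ∩ Pplusᶜ, |x i| ≤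
        β * N (A.mulVec x) + ξ * ∑ i ∈ Jᶜ, |x i|

noncomputable def Phi {n : ℕ} (Pplus : Finset (Fin n)) (s : ℕ) (ξ θ : ℝ)
    (x : Fin n → ℝ) : ℝ :=
  normS1 s (fun i => if i ∈ Pplus then (1 + θ * ξ) * max (x i) 0 else (1 + ξ) * |x i|)

def VSGCert {m n : ℕ} (A : Matrix (Fin m) (Fin n) ℝ) (Pplus : Finset (Fin n))
    (s : ℕ) (ξ θ ρ σ : ℝ) (N : (Fin m → ℝ) → ℝ)
    (Y : Matrix (Fin m) (Fin n) ℝ) (v : Fin m → ℝ) : Prop :=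
  (∀ i, Phi Pplus s ξ θ (fun j => -((1 - Y.transpose * A : Matrix (Fin n) (Fin n) ℝ) j i)) + (A.transpose.mulVec v) i ≤ ξ) ∧
  (∀ i ∉ Pplus, Phi Pplus s ξ θ (fun j => (1 - Y.transpose * A : Matrix (Fin n) (Fin n) ℝ) j i) - (A.transpose.mulVec v) i ≤ ξ) ∧
  (∀ i ∈ Pplus, Phi Pplus s ξ θ (fun j => (1 - Y.transpose * A : Matrix (Fin n) (Fin n) ℝ) j i) - (A.transpose.mulVec v) i ≤ θ * ξ) ∧
  (∀ i, dualNorm N (fun k => Y k i) ≤ σ) ∧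
  dualNorm N v ≤ ρ

def VSG {m n : ℕ} (A : Matrix (Fin m) (Fin n) ℝ) (Pplus : Finset (Fin n))
    (s : ℕ) (ξ θ ρ σ : ℝ) (N : (Fin m → ℝ) → ℝ) : Prop :=
  ∃ (Y : Matrix (Fin m) (Fin n) ℝ) (v : Fin m → ℝ), VSGCert A Pplus s ξ θ ρ σ N Y v

def VSGbarCert {m n : ℕ} (A : Matrix (Fin m) (Fin n) ℝ) (Pplus : Finset (Fin n))
    (s : ℕ) (ξ σ θ : ℝ) (N : (Fin m → ℝ) → ℝ) (Y : Matrix (Fin m) (Fin n) ℝ) : Prop :=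
  (∀ i, dualNorm N (fun k => Y k i) ≤ σ) ∧
  (∀ i ∉ Pplus, ∀ j, |(1 - Y.transpose * A : Matrix (Fin n) (Fin n) ℝ) i j| ≤ ξ / ((1 + ξ) * s)) ∧
  (∀ i ∈ Pplus, ∀ j ∉ Pplus,
    -(ξ / ((1 + ξ * θ) * s)) ≤ (1 - Y.transpose * A : Matrix (Fin n) (Fin n) ℝ) i j ∧
      (1 - Y.transpose * A : Matrix (Fin n) (Fin n) ℝ) i j ≤ ξ / ((1 + ξ * θ) * s)) ∧
  (∀ i ∈ Pplus, ∀ j ∈ Pplus,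
    -(ξ / ((1 + ξ * θ) * s)) ≤ (1 - Y.transpose * A : Matrix (Fin n) (Fin n) ℝ) i j ∧
      (1 - Y.transpose * A : Matrix (Fin n) (Fin n) ℝ) i j ≤ ξ * θ / ((1 + ξ * θ) * s))

theorem stmt0 {m n : ℕ} (A : Matrix (Fin m) (Fin n) ℝ) (Pplus : Finset (Fin n))
    (s : ℕ) (hs : 1 ≤ s) (hA : SemiGood A Pplus s)
    (J : Finset (Fin n)) (hJ : J.card ≤ s)
    (x : Fin n → ℝ) (hker : A.mulVec x = 0) (hx : x ≠ 0)
    (hsign : ∀ i ∈ Pplus \ J, x i ≤ 0) :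
    ∑ i ∈ J ∩ Pplus, x i + ∑ i ∈ J ∩ Pplusᶜ, |x i| < ∑ i ∈ Jᶜ, |x i| := by
  classical
  set w : Fin n → ℝ := fun i => if i ∈ J then (if i ∈ Pplus then max (x i) 0 else x i) else 0 with hw_def
  set z : Fin n → ℝ := w - x with hz_def
  have hsparse : (Finset.univ.filter (fun i => w i ≠ 0)).card ≤ s := by
    refine le_trans (Finset.card_le_card ?_) hJ
    intro i hi
    simp only [Finset.mem_filter] at hi
    by_contra hiJ
    exact hi.2 (by simp [hw_def, hiJ])
  have hwpos : ∀ i ∈ Pplus, 0 ≤ w i := by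
    intro i hi
    by_cases hiJ : i ∈ J
    · simp [hw_def, hiJ, hi, le_max_right]
    · simp [hw_def, hiJ]
  have hAz : A.mulVec z = A.mulVec w := by
    rw [hz_def, A.mulVec_sub, hker, sub_zero]
  have hzpos : ∀ i ∈ Pplus, 0 ≤ z i := by
    intro i hi
    by_cases hiJ : i ∈ J
    · simp only [hz_def, Pi.sub_apply, hw_def, hiJ, hi, if_true]
      have := le_max_left (x i) 0
      linarith
    · have hx0 : x i ≤ 0 := hsign i (Finset.mem_sdiff.mpr ⟨hi, hiJ⟩)
      simp only [hz_def, Pi.sub_apply, hw_def, hiJ, if_false]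
      linarith
  have hne : z ≠ w := by
    intro h
    apply hx
    funext i
    have := congrFun h i
    simp only [hz_def, Pi.sub_apply] at this
    show x i = 0
    linarith
  have hlt : ∑ i, |w i| < ∑ i, |z i| := by
    by_contra hle
    push_neg at hle
    exact hne (hA w hsparse hwpos z hAz hzpos hle)
  -- sum decompositions
  have split : ∀ f : Fin n → ℝ, ∑ i, f i =
      ∑ i ∈ J ∩ Pplus, f i + ∑ i ∈ J ∩ Pplusᶜ, f i + ∑ i ∈ Jᶜ, f i := by
    intro f
    have h1 : ∑ i ∈ J, f i + ∑ i ∈ Jᶜ, f i = ∑ i, f i := Finset.sum_add_sum_compl J f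
    have h2 : ∑ i ∈ J ∩ Pplus, f i + ∑ i ∈ J \ Pplus, f i = ∑ i ∈ J, f i :=
      Finset.sum_inter_add_sum_sdiff J Pplus f
    have h3 : J ∩ Pplusᶜ = J \ Pplus := by
      ext i; simp [Finset.mem_sdiff]
    rw [h3]
    linarith
  have hw_sum : ∑ i, |w i| = ∑ i ∈ J ∩ Pplus, max (x i) 0 + ∑ i ∈ J ∩ Pplusᶜ, |x i| := by
    rw [split (fun i => |w i|)]
    have e1 : ∑ i ∈ J ∩ Pplus, |w i| = ∑ i ∈ J ∩ Pplus, max (x i) 0 := by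
      apply Finset.sum_congr rfl
      intro i hi
      rw [Finset.mem_inter] at hi
      simp [hw_def, hi.1, hi.2, abs_of_nonneg (le_max_right (x i) 0)]
    have e2 : ∑ i ∈ J ∩ Pplusᶜ, |w i| = ∑ i ∈ J ∩ Pplusᶜ, |x i| := by
      apply Finset.sum_congr rfl
      intro i hi
      rw [Finset.mem_inter, Finset.mem_compl] at hi
      simp [hw_def, hi.1, hi.2]
    have e3 : ∑ i ∈ Jᶜ, |w i| = 0 := by
      apply Finset.sum_eq_zero
      intro i hi
      rw [Finset.mem_compl] at hi
      simp [hw_def, hi]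
    rw [e1, e2, e3, add_zero]
  have hz_sum : ∑ i, |z i| = ∑ i ∈ J ∩ Pplus, max (-x i) 0 + ∑ i ∈ Jᶜ, |x i| := by
    rw [split (fun i => |z i|)]
    have e1 : ∑ i ∈ J ∩ Pplus, |z i| = ∑ i ∈ J ∩ Pplus, max (-x i) 0 := by
      apply Finset.sum_congr rfl
      intro i hi
      rw [Finset.mem_inter] at hi
      simp only [hz_def, Pi.sub_apply, hw_def, hi.1, hi.2, if_true]
      rcases le_or_gt (x i) 0 with h | h
      · rw [max_eq_right h, zero_sub, abs_neg, abs_of_nonpos h, max_eq_left (by linarith)]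
      · rw [max_eq_left h.le, sub_self, abs_zero, max_eq_right (by linarith)]
    have e2 : ∑ i ∈ J ∩ Pplusᶜ, |z i| = 0 := by
      apply Finset.sum_eq_zero
      intro i hi
      rw [Finset.mem_inter, Finset.mem_compl] at hi
      simp [hz_def, hw_def, hi.1, hi.2]
    have e3 : ∑ i ∈ Jᶜ, |z i| = ∑ i ∈ Jᶜ, |x i| := by
      apply Finset.sum_congr rfl
      intro i hi
      rw [Finset.mem_compl] at hi
      simp [hz_def, hw_def, hi]
    rw [e1, e2, e3, add_zero]
  have hxmax : ∑ i ∈ J ∩ Pplus, x i =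
      ∑ i ∈ J ∩ Pplus, max (x i) 0 - ∑ i ∈ J ∩ Pplus, max (-x i) 0 := by
    rw [← Finset.sum_sub_distrib]
    apply Finset.sum_congr rfl
    intro i _
    rcases le_or_gt (x i) 0 with h | h
    · rw [max_eq_right h, max_eq_left (by linarith)]; ring
    · rw [max_eq_left h.le, max_eq_right (by linarith)]; ring
  rw [hw_sum, hz_sum] at hlt
  linarith
end

section
/- Let A be an m×n real matrix and s ≥ 1 an integer. Suppose that for every subset J of {1,…,n} with Card(J) ≤ s and every nonzero x in the kernel of A with x_i ≤ 0 for all i ∈ P_+ ∖ J one has Σ_{i∈J∩P_+} x_i + Σ_{i∈J∩P_n} |x_i| < Σ_{i∉J} |x_i|. Then there exists ξ ∈ (0,1) such that for every subset J of {1,…,n} with Card(J) ≤ s and every x in the kernel of A with x_i ≤ 0 for all i ∈ P_+ ∖ J, one has Σ_{i∈J∩P_+} x_i + Σ_{i∈J∩P_n} |x_i| ≤ ξ · Σ_{i∉J} |x_i|. -/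
open Finset

lemma keyJ {m n : ℕ} (A : Matrix (Fin m) (Fin n) ℝ) (Pplus : Finset (Fin n))
    (J : Finset (Fin n))
    (h : ∀ x : Fin n → ℝ, A.mulVec x = 0 → x ≠ 0 → (∀ i ∈ Pplus \ J, x i ≤ 0) →
        ∑ i ∈ J ∩ Pplus, x i + ∑ i ∈ J ∩ Pplusᶜ, |x i| < ∑ i ∈ Jᶜ, |x i|) :
    ∃ ξ : ℝ, 0 < ξ ∧ ξ < 1 ∧
      ∀ x : Fin n → ℝ, A.mulVec x = 0 → (∀ i ∈ Pplus \ J, x i ≤ 0) →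
          ∑ i ∈ J ∩ Pplus, x i + ∑ i ∈ J ∩ Pplusᶜ, |x i| ≤ ξ * ∑ i ∈ Jᶜ, |x i| := by
  set f : (Fin n → ℝ) → ℝ := fun x =>
    (∑ i ∈ J ∩ Pplus, x i + ∑ i ∈ J ∩ Pplusᶜ, |x i|) - ∑ i ∈ Jᶜ, |x i| with hf
  have hfval : ∀ x, f x =
      (∑ i ∈ J ∩ Pplus, x i + ∑ i ∈ J ∩ Pplusᶜ, |x i|) - ∑ i ∈ Jᶜ, |x i| := fun _ => rfl
  set K : Set (Fin n → ℝ) :=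
    {x | A.mulVec x = 0 ∧ (∀ i ∈ Pplus \ J, x i ≤ 0) ∧ ∑ i, |x i| = 1} with hKdef
  have hfc : Continuous f := by
    apply Continuous.sub
    · exact Continuous.add (continuous_finset_sum _ fun i _ => continuous_apply i)
        (continuous_finset_sum _ fun i _ => (continuous_apply i).abs)
    · exact continuous_finset_sum _ fun i _ => (continuous_apply i).abs
  -- K is compact
  have hKclosed : IsClosed K := by
    have e1 : IsClosed {x : Fin n → ℝ | A.mulVec x = 0} :=
      isClosed_eq (continuous_pi fun k => by
        have hk : (fun a : Fin n → ℝ => A.mulVec a k) = fun a => ∑ j, A k j * a j := rfl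
        rw [hk]
        exact continuous_finset_sum _ fun j _ => continuous_const.mul (continuous_apply j))
        continuous_const
    have e2 : IsClosed {x : Fin n → ℝ | ∀ i ∈ Pplus \ J, x i ≤ 0} := by
      have : {x : Fin n → ℝ | ∀ i ∈ Pplus \ J, x i ≤ 0}
          = ⋂ i ∈ (Pplus \ J : Finset (Fin n)), {x : Fin n → ℝ | x i ≤ 0} := by
        ext x; simp
      rw [this]
      exact isClosed_biInter fun i _ => isClosed_le (continuous_apply i) continuous_const
    have e3 : IsClosed {x : Fin n → ℝ | ∑ i, |x i| = 1} :=
      isClosed_eq (continuous_finset_sum _ fun i _ => (continuous_apply i).abs) continuous_const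
    have : K = {x : Fin n → ℝ | A.mulVec x = 0} ∩
        ({x : Fin n → ℝ | ∀ i ∈ Pplus \ J, x i ≤ 0} ∩ {x : Fin n → ℝ | ∑ i, |x i| = 1}) := by
      ext x; simp [hKdef, and_assoc]
    rw [this]
    exact e1.inter (e2.inter e3)
  have hKbdd : Bornology.IsBounded K := by
    apply Bornology.IsBounded.subset (Metric.isBounded_closedBall (x := (0 : Fin n → ℝ)) (r := 1))
    intro x hx
    simp only [Metric.mem_closedBall, dist_zero_right]
    rw [pi_norm_le_iff_of_nonneg zero_le_one]
    intro i
    rw [Real.norm_eq_abs]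
    calc |x i| ≤ ∑ j, |x j| :=
          Finset.single_le_sum (f := fun j => |x j|) (fun j _ => abs_nonneg _) (Finset.mem_univ i)
    _ = 1 := hx.2.2
  have hKcomp : IsCompact K := Metric.isCompact_of_isClosed_isBounded hKclosed hKbdd
  -- a uniform gap
  have hgap : ∃ c : ℝ, 0 < c ∧ c ≤ 1/2 ∧ ∀ y ∈ K, f y ≤ -c := by
    rcases K.eq_empty_or_nonempty with hKe | hne
    · exact ⟨1/2, by norm_num, le_refl _, fun y hy => absurd hy (by simp [hKe])⟩
    · obtain ⟨x₀, hx₀K, hmax⟩ := hKcomp.exists_isMaxOn hne hfc.continuousOn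
      have hx₀ne : x₀ ≠ 0 := by
        intro h0
        have := hx₀K.2.2
        simp [h0] at this
      have hneg : f x₀ < 0 := by
        have := h x₀ hx₀K.1 hx₀ne hx₀K.2.1
        rw [hfval]
        linarith
      refine ⟨min (-f x₀) (1/2), lt_min (by linarith) (by norm_num), min_le_right _ _,
        fun y hy => ?_⟩
      have h2 : f y ≤ f x₀ := hmax hy
      have h1 : min (-f x₀) (1/2) ≤ -f x₀ := min_le_left _ _
      have h3 : f x₀ ≤ -(min (-f x₀) (1/2)) := by
        have h4 := neg_le_neg h1
        rwa [neg_neg] at h4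
      exact h2.trans h3
  obtain ⟨c, hc0, hc12, hcK⟩ := hgap
  refine ⟨1 - c, by linarith, by linarith, ?_⟩
  intro x hAx hsign
  by_cases hx0 : x = 0
  · simp [hx0]
  · set t : ℝ := ∑ i, |x i| with ht
    have ht0 : 0 < t := by
      have : ∃ i, x i ≠ 0 := by
        by_contra hc
        push_neg at hc
        exact hx0 (funext hc)
      obtain ⟨i, hi⟩ := this
      have h1 : 0 < |x i| := abs_pos.mpr hi
      exact lt_of_lt_of_le h1
        (Finset.single_le_sum (f := fun j => |x j|) (fun j _ => abs_nonneg _) (Finset.mem_univ i))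
    set y : Fin n → ℝ := t⁻¹ • x with hy
    have hyK : y ∈ K := by
      refine ⟨?_, ?_, ?_⟩
      · rw [hy, Matrix.mulVec_smul, hAx]; simp
      · intro i hi
        have h1 := hsign i hi
        have h2 : t⁻¹ * x i ≤ 0 := mul_nonpos_of_nonneg_of_nonpos (by positivity) h1
        simpa [hy] using h2
      · simp only [hy, Pi.smul_apply, smul_eq_mul, abs_mul, abs_inv, abs_of_pos ht0]
        rw [← Finset.mul_sum, ← ht, inv_mul_cancel₀ (ne_of_gt ht0)]
    have hfy := hcK y hyK
    rw [hfval] at hfy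
    have hgy1 : ∑ i ∈ Jᶜ, |y i| ≤ 1 := by
      have h1 : ∑ i ∈ Jᶜ, |y i| ≤ ∑ i, |y i| :=
        Finset.sum_le_sum_of_subset_of_nonneg (Finset.subset_univ _) (fun i _ _ => abs_nonneg _)
      rw [hyK.2.2] at h1
      exact h1
    have key : ∑ i ∈ J ∩ Pplus, y i + ∑ i ∈ J ∩ Pplusᶜ, |y i| ≤ (1 - c) * ∑ i ∈ Jᶜ, |y i| := by
      have hgy0 : 0 ≤ ∑ i ∈ Jᶜ, |y i| := Finset.sum_nonneg fun i _ => abs_nonneg _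
      nlinarith
    -- scale back
    have hxty : ∀ i, x i = t * y i := by
      intro i
      simp only [hy, Pi.smul_apply, smul_eq_mul]
      field_simp
    have habs : ∀ i, |x i| = t * |y i| := by
      intro i
      rw [hxty i, abs_mul, abs_of_pos ht0]
    calc ∑ i ∈ J ∩ Pplus, x i + ∑ i ∈ J ∩ Pplusᶜ, |x i|
        = t * (∑ i ∈ J ∩ Pplus, y i + ∑ i ∈ J ∩ Pplusᶜ, |y i|) := by
          rw [mul_add, Finset.mul_sum, Finset.mul_sum]
          rw [Finset.sum_congr rfl (fun i _ => hxty i), Finset.sum_congr rfl (fun i _ => habs i)]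
      _ ≤ t * ((1 - c) * ∑ i ∈ Jᶜ, |y i|) := by
          exact mul_le_mul_of_nonneg_left key (le_of_lt ht0)
      _ = (1 - c) * ∑ i ∈ Jᶜ, |x i| := by
          simp only [Finset.mul_sum, habs]
          exact Finset.sum_congr rfl fun i _ => by ring

theorem stmt1 {m n : ℕ} (A : Matrix (Fin m) (Fin n) ℝ) (Pplus : Finset (Fin n))
    (s : ℕ) (hs : 1 ≤ s)
    (h : ∀ J : Finset (Fin n), J.card ≤ s →
      ∀ x : Fin n → ℝ, A.mulVec x = 0 → x ≠ 0 → (∀ i ∈ Pplus \ J, x i ≤ 0) →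
        ∑ i ∈ J ∩ Pplus, x i + ∑ i ∈ J ∩ Pplusᶜ, |x i| < ∑ i ∈ Jᶜ, |x i|) :
    ∃ ξ : ℝ, 0 < ξ ∧ ξ < 1 ∧
      ∀ J : Finset (Fin n), J.card ≤ s →
        ∀ x : Fin n → ℝ, A.mulVec x = 0 → (∀ i ∈ Pplus \ J, x i ≤ 0) →
          ∑ i ∈ J ∩ Pplus, x i + ∑ i ∈ J ∩ Pplusᶜ, |x i| ≤ ξ * ∑ i ∈ Jᶜ, |x i| := by
  have hQ : ∀ J : Finset (Fin n), ∃ ξ : ℝ, 0 < ξ ∧ ξ < 1 ∧ (J.card ≤ s →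
      ∀ x : Fin n → ℝ, A.mulVec x = 0 → (∀ i ∈ Pplus \ J, x i ≤ 0) →
        ∑ i ∈ J ∩ Pplus, x i + ∑ i ∈ J ∩ Pplusᶜ, |x i| ≤ ξ * ∑ i ∈ Jᶜ, |x i|) := by
    intro J
    by_cases hJ : J.card ≤ s
    · obtain ⟨ξ, h1, h2, h3⟩ := keyJ A Pplus J (h J hJ)
      exact ⟨ξ, h1, h2, fun _ => h3⟩
    · exact ⟨1/2, by norm_num, by norm_num, fun hc => absurd hc hJ⟩
  choose g hg1 hg2 hg3 using hQ
  have hne : (Finset.univ : Finset (Finset (Fin n))).Nonempty := ⟨∅, Finset.mem_univ _⟩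
  refine ⟨Finset.univ.sup' hne g, ?_, ?_, ?_⟩
  · obtain ⟨J₀, hJ₀⟩ := hne
    exact lt_of_lt_of_le (hg1 J₀) (Finset.le_sup' g hJ₀)
  · rw [Finset.sup'_lt_iff]
    exact fun J _ => hg2 J
  · intro J hJ x hAx hsign
    have h1 := hg3 J hJ x hAx hsign
    have h2 : g J ≤ Finset.univ.sup' hne g := Finset.le_sup' g (Finset.mem_univ J)
    have h3 : 0 ≤ ∑ i ∈ Jᶜ, |x i| := Finset.sum_nonneg fun i _ => abs_nonneg _
    calc ∑ i ∈ J ∩ Pplus, x i + ∑ i ∈ J ∩ Pplusᶜ, |x i| ≤ g J * ∑ i ∈ Jᶜ, |x i| := h1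
      _ ≤ Finset.univ.sup' hne g * ∑ i ∈ Jᶜ, |x i| := mul_le_mul_of_nonneg_right h2 h3
end

section
/- Let A be an m×n real matrix, s ≥ 1 an integer, and ξ ∈ (0,1). Suppose that for every subset J of {1,…,n} with Card(J) ≤ s and every x in the kernel of A with x_i ≤ 0 for all i ∈ P_+ ∖ J one has Σ_{i∈J∩P_+} x_i + Σ_{i∈J∩P_n} |x_i| ≤ ξ · Σ_{i∉J} |x_i|. Then A is s-semigood. -/
open Finset

theorem stmt2 {m n : ℕ} (A : Matrix (Fin m) (Fin n) ℝ) (Pplus : Finset (Fin n))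
    (s : ℕ) (hs : 1 ≤ s) (ξ : ℝ) (hξ0 : 0 < ξ) (hξ1 : ξ < 1)
    (h : ∀ J : Finset (Fin n), J.card ≤ s →
      ∀ x : Fin n → ℝ, A.mulVec x = 0 → (∀ i ∈ Pplus \ J, x i ≤ 0) →
        ∑ i ∈ J ∩ Pplus, x i + ∑ i ∈ J ∩ Pplusᶜ, |x i| ≤ ξ * ∑ i ∈ Jᶜ, |x i|) :
    SemiGood A Pplus s := by
  intro w hw hwpos z hAz hzpos hz1
  classical
  set x : Fin n → ℝ := fun i => w i - z i with hxdef
  have hAx : A.mulVec x = 0 := by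
    have hx' : x = w - z := rfl
    rw [hx', Matrix.mulVec_sub, hAz, sub_self]
  set J : Finset (Fin n) := Finset.univ.filter (fun i => w i ≠ 0) with hJdef
  have hwJ : ∀ i, i ∉ J → w i = 0 := by
    intro i hi
    by_contra hne
    exact hi (by simp [hJdef, hne])
  have hxJ : ∀ i, i ∉ J → x i = -(z i) := by
    intro i hi; simp [hxdef, hwJ i hi]
  set T : ℝ := ∑ i ∈ Jᶜ, |x i| with hTdef
  set S : ℝ := ∑ i ∈ J ∩ Pplus, x i + ∑ i ∈ J ∩ Pplusᶜ, |x i| with hSdef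
  have hinterP : J ∩ Pplus = J.filter (fun i => i ∈ Pplus) := by
    ext i; simp [Finset.mem_filter, and_comm]
  have hinterPc : J ∩ Pplusᶜ = J.filter (fun i => i ∉ Pplus) := by
    ext i; simp [Finset.mem_filter, and_comm]
  -- Step 1 : T ≤ S
  have hTS : T ≤ S := by
    have hsplitz : ∑ i ∈ J, |z i| + ∑ i ∈ Jᶜ, |z i| = ∑ i, |z i| :=
      Finset.sum_add_sum_compl J _
    have hsplitw : ∑ i ∈ J, |w i| + ∑ i ∈ Jᶜ, |w i| = ∑ i, |w i| :=
      Finset.sum_add_sum_compl J _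
    have hwc : ∑ i ∈ Jᶜ, |w i| = 0 := by
      apply Finset.sum_eq_zero
      intro i hi
      rw [hwJ i (by simpa using hi)]; simp
    have hzc : ∑ i ∈ Jᶜ, |z i| = T := by
      rw [hTdef]
      apply Finset.sum_congr rfl
      intro i hi
      rw [hxJ i (by simpa using hi), abs_neg]
    have key : T ≤ ∑ i ∈ J, (|w i| - |z i|) := by
      rw [Finset.sum_sub_distrib]
      nlinarith [hsplitz, hsplitw, hwc, hzc, hz1]
    refine key.trans ?_
    have hsplitJ : ∑ i ∈ J, (|w i| - |z i|) =
        ∑ i ∈ J ∩ Pplus, (|w i| - |z i|) + ∑ i ∈ J ∩ Pplusᶜ, (|w i| - |z i|) := by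
      rw [hinterP, hinterPc, Finset.sum_filter_add_sum_filter_not]
    have e1 : ∑ i ∈ J ∩ Pplus, (|w i| - |z i|) = ∑ i ∈ J ∩ Pplus, x i := by
      apply Finset.sum_congr rfl
      intro i hi
      rw [Finset.mem_inter] at hi
      rw [abs_of_nonneg (hwpos i hi.2), abs_of_nonneg (hzpos i hi.2)]
    have e2 : ∑ i ∈ J ∩ Pplusᶜ, (|w i| - |z i|) ≤ ∑ i ∈ J ∩ Pplusᶜ, |x i| :=
      Finset.sum_le_sum (fun i _ => abs_sub_abs_le_abs_sub _ _)
    rw [hsplitJ, hSdef, e1]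
    linarith
  -- Step 2 : S ≤ ξ * T
  have hST : S ≤ ξ * T := by
    refine h J hw x hAx ?_
    intro i hi
    rw [Finset.mem_sdiff] at hi
    rw [hxJ i hi.2]
    simpa using hzpos i hi.1
  have hT0 : T = 0 := by
    have hTnn : 0 ≤ T := Finset.sum_nonneg (fun i _ => abs_nonneg _)
    nlinarith
  have hS0 : S = 0 := le_antisymm (by nlinarith) (hT0 ▸ hTS)
  have hxoff : ∀ i, i ∉ J → x i = 0 := by
    intro i hi
    have : |x i| = 0 :=
      (Finset.sum_eq_zero_iff_of_nonneg
        (fun j (_ : j ∈ Jᶜ) => abs_nonneg (x j))).mp hT0 i (by simpa using hi)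
    exact abs_eq_zero.mp this
  -- Step 3 : refined set J2
  set J2 : Finset (Fin n) := J.filter (fun i => i ∉ Pplus ∨ 0 < x i) with hJ2def
  have hJ2card : J2.card ≤ s :=
    le_trans (Finset.card_le_card (Finset.filter_subset _ _)) hw
  have hST2 : ∑ i ∈ J2 ∩ Pplus, x i + ∑ i ∈ J2 ∩ Pplusᶜ, |x i| ≤
      ξ * ∑ i ∈ J2ᶜ, |x i| := by
    apply h J2 hJ2card x hAx
    intro i hi
    rw [Finset.mem_sdiff] at hi
    by_cases hiJ : i ∈ J
    · have hnot : ¬(i ∉ Pplus ∨ 0 < x i) := by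
        intro hor
        exact hi.2 (by rw [hJ2def, Finset.mem_filter]; exact ⟨hiJ, hor⟩)
      push_neg at hnot
      exact hnot.2
    · rw [hxoff i hiJ]
  set D : Finset (Fin n) := J \ J2 with hDdef
  have hDchar : D = (J ∩ Pplus).filter (fun i => ¬ 0 < x i) := by
    rw [hDdef, hJ2def]
    ext i
    simp only [Finset.mem_sdiff, Finset.mem_filter, Finset.mem_inter]
    tauto
  have hJ2Pchar : J2 ∩ Pplus = (J ∩ Pplus).filter (fun i => 0 < x i) := by
    rw [hJ2def]
    ext i
    simp only [Finset.mem_inter, Finset.mem_filter]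
    tauto
  have hDmem : ∀ i ∈ D, i ∈ Pplus ∧ x i ≤ 0 := by
    intro i hi
    rw [hDchar, Finset.mem_filter, Finset.mem_inter] at hi
    exact ⟨hi.1.2, le_of_not_gt hi.2⟩
  set T2 : ℝ := ∑ i ∈ D, |x i| with hT2def
  have hT2c : ∑ i ∈ J2ᶜ, |x i| = T2 := by
    rw [hT2def]
    symm
    apply Finset.sum_subset
    · intro i hi
      rw [hDdef, Finset.mem_sdiff] at hi
      simpa using hi.2
    · intro i hi hni
      have hiJ : i ∉ J := by
        intro hiJ
        exact hni (by rw [hDdef, Finset.mem_sdiff]; exact ⟨hiJ, by simpa using hi⟩)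
      rw [hxoff i hiJ]; simp
  have hP2c : J2 ∩ Pplusᶜ = J ∩ Pplusᶜ := by
    rw [hJ2def]
    ext i
    simp only [Finset.mem_inter, Finset.mem_compl, Finset.mem_filter]
    tauto
  have hPsplit : ∑ i ∈ J ∩ Pplus, x i = ∑ i ∈ J2 ∩ Pplus, x i + ∑ i ∈ D, x i := by
    rw [hJ2Pchar, hDchar, Finset.sum_filter_add_sum_filter_not]
  have hDsum : ∑ i ∈ D, x i = -T2 := by
    rw [hT2def, ← Finset.sum_neg_distrib]
    apply Finset.sum_congr rfl
    intro i hi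
    rw [abs_of_nonpos (hDmem i hi).2, neg_neg]
  set S2 : ℝ := ∑ i ∈ J2 ∩ Pplus, x i + ∑ i ∈ J2 ∩ Pplusᶜ, |x i| with hS2def
  have hSdec : S = S2 - T2 := by
    rw [hSdef, hS2def, hPsplit, hDsum, hP2c]; ring
  have hS2T2 : S2 = T2 := by linarith [hS0, hSdec]
  have hT2nn : 0 ≤ T2 := Finset.sum_nonneg (fun i _ => abs_nonneg _)
  have hT20 : T2 = 0 := by
    have hle : S2 ≤ ξ * T2 := by rw [← hT2c]; exact hST2
    nlinarith
  have hS20 : S2 = 0 := by rw [hS2T2, hT20]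
  have hJ2Ppos : ∀ i ∈ J2 ∩ Pplus, 0 ≤ x i := by
    intro i hi
    rw [hJ2Pchar, Finset.mem_filter] at hi
    exact le_of_lt hi.2
  have hsum_abs : ∑ i, |x i| = 0 := by
    have h1 : ∑ i ∈ J, |x i| + ∑ i ∈ Jᶜ, |x i| = ∑ i, |x i| :=
      Finset.sum_add_sum_compl J _
    have h2 : ∑ i ∈ J, |x i| = ∑ i ∈ J ∩ Pplus, |x i| + ∑ i ∈ J ∩ Pplusᶜ, |x i| := by
      rw [hinterP, hinterPc, Finset.sum_filter_add_sum_filter_not]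
    have h3 : ∑ i ∈ J ∩ Pplus, |x i| = ∑ i ∈ J2 ∩ Pplus, |x i| + ∑ i ∈ D, |x i| := by
      rw [hJ2Pchar, hDchar, Finset.sum_filter_add_sum_filter_not]
    have h4 : ∑ i ∈ J2 ∩ Pplus, |x i| = ∑ i ∈ J2 ∩ Pplus, x i :=
      Finset.sum_congr rfl (fun i hi => abs_of_nonneg (hJ2Ppos i hi))
    have h5 : ∑ i ∈ J ∩ Pplusᶜ, |x i| = ∑ i ∈ J2 ∩ Pplusᶜ, |x i| := by rw [hP2c]
    rw [← h1, h2, h3, h4, h5, ← hTdef, ← hT2def]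
    linarith [hS20, hT20, hT0, hS2def]
  funext i
  have hzi : |x i| = 0 :=
    (Finset.sum_eq_zero_iff_of_nonneg
      (fun j (_ : j ∈ Finset.univ) => abs_nonneg (x j))).mp hsum_abs i (Finset.mem_univ i)
  have := abs_eq_zero.mp hzi
  simp only [hxdef] at this
  linarith
end

section
/- Let A be an m×n real matrix, s ≥ 1 an integer, and ξ ∈ (0,1). Suppose that for every subset J of {1,…,n} with Card(J) ≤ s and every x in the kernel of A with x_i ≤ 0 for all i ∈ P_+ ∖ J one has Σ_{i∈J∩P_+} x_i + Σ_{i∈J∩P_n} |x_i| ≤ ξ · Σ_{i∉J} |x_i|. Then for every ξ' ∈ (ξ,1) there exists θ ∈ [1,∞) such that A satisfies SG_s(ξ',θ), i.e., for every x ∈ Ker A and every subset J of {1,…,n} with Card(J) ≤ s, Σ_{i∈J∩P_+} x_i + Σ_{i∈J∩P_n} |x_i| ≤ ξ' · (Σ_{i∈P_n∖J} |x_i| + Σ_{i∈P_+∖J} max(−x_i, θ·x_i)). -/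
open Finset

lemma max_neg_theta (a θ : ℝ) (hθ : 1 ≤ θ) :
    max (-a) (θ * a) = |a| + (θ - 1) * max a 0 := by
  rcases le_total a 0 with ha | ha
  · rw [max_eq_right ha, abs_of_nonpos ha, max_eq_left (by nlinarith)]
    ring
  · rw [max_eq_left ha, abs_of_nonneg ha, max_eq_right (by nlinarith)]
    ring

lemma sum_compl_split {n : ℕ} (J Pplus : Finset (Fin n)) (f : Fin n → ℝ) :
    ∑ i ∈ Jᶜ, f i = ∑ i ∈ Pplusᶜ \ J, f i + ∑ i ∈ Pplus \ J, f i := by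
  have h1 : Pplusᶜ \ J = Jᶜ \ Pplus := by ext i; simp [and_comm]
  have h2 : Pplus \ J = Jᶜ ∩ Pplus := by ext i; simp [and_comm]
  rw [h1, h2, add_comm, Finset.sum_inter_add_sum_sdiff]

lemma auxJ {m n : ℕ} (A : Matrix (Fin m) (Fin n) ℝ) (Pplus : Finset (Fin n))
    (ξ ξ' : ℝ) (hξ0 : 0 < ξ) (hξ' : ξ < ξ')
    (J : Finset (Fin n))
    (h : ∀ x : Fin n → ℝ, A.mulVec x = 0 → (∀ i ∈ Pplus \ J, x i ≤ 0) →
        ∑ i ∈ J ∩ Pplus, x i + ∑ i ∈ J ∩ Pplusᶜ, |x i| ≤ ξ * ∑ i ∈ Jᶜ, |x i|) :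
    ∃ C : ℝ, 0 ≤ C ∧ ∀ x : Fin n → ℝ, A.mulVec x = 0 →
      ∑ i ∈ J ∩ Pplus, x i + ∑ i ∈ J ∩ Pplusᶜ, |x i| ≤
        ξ' * ∑ i ∈ Jᶜ, |x i| + C * ∑ i ∈ Pplus \ J, max (x i) 0 := by
  have hξ'0 : 0 < ξ' := hξ0.trans hξ'
  set Sf : (Fin n → ℝ) → ℝ := fun x => ∑ i ∈ J ∩ Pplus, x i + ∑ i ∈ J ∩ Pplusᶜ, |x i| with hSf
  set Sg : (Fin n → ℝ) → ℝ := fun x => ∑ i ∈ Jᶜ, |x i| with hSg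
  set Pf : (Fin n → ℝ) → ℝ := fun x => ∑ i ∈ Pplus \ J, max (x i) 0 with hPf
  have hSgnn : ∀ x, 0 ≤ Sg x := fun x => Finset.sum_nonneg fun i _ => abs_nonneg _
  have hPnn : ∀ x, 0 ≤ Pf x := fun x => Finset.sum_nonneg fun i _ => le_max_right _ _
  -- homogeneity
  have hShom : ∀ (t : ℝ), 0 ≤ t → ∀ x, Sf (t • x) = t * Sf x := by
    intro t ht x
    simp only [hSf, Pi.smul_apply, smul_eq_mul, abs_mul, abs_of_nonneg ht,
      ← Finset.mul_sum, mul_add]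
  have hSghom : ∀ (t : ℝ), 0 ≤ t → ∀ x, Sg (t • x) = t * Sg x := by
    intro t ht x
    simp only [hSg, Pi.smul_apply, smul_eq_mul, abs_mul, abs_of_nonneg ht, ← Finset.mul_sum]
  have hPhom : ∀ (t : ℝ), 0 ≤ t → ∀ x, Pf (t • x) = t * Pf x := by
    intro t ht x
    simp only [hPf, Pi.smul_apply, smul_eq_mul, Finset.mul_sum]
    apply Finset.sum_congr rfl
    intro i _
    rw [mul_max_of_nonneg _ _ ht, mul_zero]
  -- S bounded by sum of abs over J
  have hSle : ∀ x, Sf x ≤ ∑ i ∈ J, |x i| := by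
    intro x
    rw [← Finset.sum_inter_add_sum_sdiff J Pplus (fun i => |x i|)]
    have h2 : J ∩ Pplusᶜ = J \ Pplus := by ext i; simp [Finset.mem_sdiff]
    rw [hSf]
    simp only [h2]
    exact add_le_add (Finset.sum_le_sum fun i _ => le_abs_self _) le_rfl
  -- subadditivity
  have hSsub : ∀ p q, Sf (p + q) ≤ Sf p + Sf q := by
    intro p q
    simp only [hSf, Pi.add_apply, Finset.sum_add_distrib]
    have := Finset.sum_le_sum (f := fun i => |p i + q i|)
      (g := fun i => |p i| + |q i|) (s := J ∩ Pplusᶜ) (fun i _ => abs_add_le _ _)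
    rw [Finset.sum_add_distrib] at this
    linarith
  -- submodules
  set K : Submodule ℝ (Fin n → ℝ) := LinearMap.ker A.mulVecLin with hK
  have hKmem : ∀ x, x ∈ K ↔ A.mulVec x = 0 := by intro x; simp [hK]
  set U : Submodule ℝ (Fin n → ℝ) := Submodule.pi (↑Jᶜ) (fun _ => ⊥) with hU
  have hUmem : ∀ x, x ∈ U ↔ ∀ i ∉ J, x i = 0 := by
    intro x; simp [hU, Submodule.mem_pi]
  set V : Submodule ℝ (Fin n → ℝ) := K ⊓ U with hV
  obtain ⟨W', hW'⟩ := Submodule.exists_isCompl V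
  set W : Submodule ℝ (Fin n → ℝ) := K ⊓ W' with hW
  have hdisj : Disjoint V W := hW'.disjoint.mono_right inf_le_right
  -- the function f
  set f : (Fin n → ℝ) → ℝ := fun x => Sf x - ξ' * Sg x with hf
  have hfc : Continuous f := by
    apply Continuous.sub
    · apply Continuous.add
      · exact continuous_finset_sum _ fun i _ => continuous_apply i
      · exact continuous_finset_sum _ fun i _ => (continuous_apply i).abs
    · exact continuous_const.mul (continuous_finset_sum _ fun i _ => (continuous_apply i).abs)
  have hPc : Continuous Pf := by
    apply continuous_finset_sum
    intro i _
    exact (continuous_apply i).max continuous_const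
  -- claim on W
  have claim : ∃ C : ℝ, 0 ≤ C ∧ ∀ q ∈ W, Sf q ≤ ξ' * Sg q + C * Pf q := by
    set Sph : Set (Fin n → ℝ) := Metric.sphere 0 1 ∩ ↑W with hSph
    have hSphc : IsCompact Sph :=
      (isCompact_sphere 0 1).inter_right (Submodule.closed_of_finiteDimensional W)
    set Z : Set (Fin n → ℝ) := Sph ∩ {x | 0 ≤ f x} with hZ
    have hZc : IsCompact Z := hSphc.inter_right (isClosed_le continuous_const hfc)
    -- on the sphere with 0 ≤ f, Pf is positive
    have hPpos : ∀ q ∈ Z, 0 < Pf q := by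
      intro q hq
      rcases hq with ⟨⟨hq1, hq2⟩, hq3⟩
      rcases (hPnn q).lt_or_eq with hlt | heq
      · exact hlt
      exfalso
      have hker : A.mulVec q = 0 := (hKmem q).mp ((hW ▸ hq2 : q ∈ K ⊓ W')).1
      have hsign : ∀ i ∈ Pplus \ J, q i ≤ 0 := by
        intro i hi
        have : max (q i) 0 = 0 := by
          have := (Finset.sum_eq_zero_iff_of_nonneg
            (fun i _ => le_max_right (q i) 0)).mp heq.symm i hi
          exact this
        calc q i ≤ max (q i) 0 := le_max_left _ _
        _ = 0 := this
      have h1 : Sf q ≤ ξ * Sg q := h q hker hsign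
      have h2 : ξ' * Sg q ≤ Sf q := by simpa [hf] using hq3
      have hSg0 : Sg q = 0 := by nlinarith [hSgnn q]
      have hqJ : ∀ i ∉ J, q i = 0 := by
        intro i hi
        have := (Finset.sum_eq_zero_iff_of_nonneg
          (fun i _ => abs_nonneg (q i))).mp hSg0 i (by simpa using hi)
        exact abs_eq_zero.mp this
      have hqV : q ∈ V := ⟨(hW ▸ hq2 : q ∈ K ⊓ W').1, (hUmem q).mpr hqJ⟩
      have : q = 0 := Submodule.disjoint_def.mp hdisj q hqV hq2
      rw [this] at hq1
      simp at hq1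
    rcases Set.eq_empty_or_nonempty Z with hZe | hZne
    · refine ⟨0, le_rfl, ?_⟩
      intro q hqW
      by_cases hq0 : q = 0
      · simp [hq0, hSf, hSg]
      · have ht : (0:ℝ) < ‖q‖ := norm_pos_iff.mpr hq0
        set q' := ‖q‖⁻¹ • q with hq'
        have hq'W : q' ∈ W := W.smul_mem _ hqW
        have hq'n : ‖q'‖ = 1 := by
          rw [hq', norm_smul, norm_inv, norm_norm, inv_mul_cancel₀ ht.ne']
        have hq'Z : q' ∉ Z := by rw [hZe]; exact Set.notMem_empty _
        have : f q' < 0 := by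
          by_contra hc
          exact hq'Z ⟨⟨by simpa using hq'n, hq'W⟩, le_of_not_gt hc⟩
        have hq'lt : Sf q' < ξ' * Sg q' := by simpa [hf, sub_neg] using this
        have hqeq : q = ‖q‖ • q' := by
          rw [hq', smul_smul, mul_inv_cancel₀ ht.ne', one_smul]
        rw [hqeq, hShom _ ht.le, hSghom _ ht.le, hPhom _ ht.le]
        rw [zero_mul, add_zero, mul_left_comm]
        exact mul_le_mul_of_nonneg_left hq'lt.le ht.le
    · obtain ⟨q0, hq0Z, hq0min⟩ := hZc.exists_isMinOn hZne hPc.continuousOn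
      set β := Pf q0 with hβ
      have hβpos : 0 < β := hPpos q0 hq0Z
      refine ⟨(n : ℝ) / β, by positivity, ?_⟩
      intro q hqW
      by_cases hq0' : q = 0
      · simp [hq0', hSf, hSg, hPf]
      have ht : (0:ℝ) < ‖q‖ := norm_pos_iff.mpr hq0'
      set q' := ‖q‖⁻¹ • q with hq'
      have hq'W : q' ∈ W := W.smul_mem _ hqW
      have hq'n : ‖q'‖ = 1 := by
        rw [hq', norm_smul, norm_inv, norm_norm, inv_mul_cancel₀ ht.ne']
      have key : Sf q' ≤ ξ' * Sg q' + ((n:ℝ)/β) * Pf q' := by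
        rcases lt_or_ge (f q') 0 with hneg | hpos
        · have h1 : Sf q' < ξ' * Sg q' := by simpa [hf, sub_neg] using hneg
          have h2 : 0 ≤ ((n:ℝ)/β) * Pf q' :=
            mul_nonneg (div_nonneg (Nat.cast_nonneg n) hβpos.le) (hPnn q')
          calc Sf q' ≤ ξ' * Sg q' := h1.le
          _ ≤ ξ' * Sg q' + ((n:ℝ)/β) * Pf q' := le_add_of_nonneg_right h2
        · have hq'Z : q' ∈ Z := ⟨⟨by simpa using hq'n, hq'W⟩, hpos⟩
          have hPq' : β ≤ Pf q' := hq0min hq'Z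
          have hSb : Sf q' ≤ (n : ℝ) := by
            calc Sf q' ≤ ∑ i ∈ J, |q' i| := hSle q'
            _ ≤ ∑ _i ∈ J, (1:ℝ) := by
                apply Finset.sum_le_sum
                intro i _
                calc |q' i| ≤ ‖q'‖ := norm_le_pi_norm q' i
                _ = 1 := hq'n
            _ = (J.card : ℝ) := by simp
            _ ≤ (n : ℝ) := by
                have := J.card_le_univ
                simp only [Finset.card_univ, Fintype.card_fin] at this
                exact_mod_cast this
          have hnb : (n : ℝ) = ((n:ℝ)/β) * β := by field_simp
          calc Sf q' ≤ (n:ℝ) := hSb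
          _ = ((n:ℝ)/β) * β := hnb
          _ ≤ ((n:ℝ)/β) * Pf q' := by
              apply mul_le_mul_of_nonneg_left hPq'; positivity
          _ ≤ ξ' * Sg q' + ((n:ℝ)/β) * Pf q' := by nlinarith [hSgnn q']
      have hqeq : q = ‖q‖ • q' := by
        rw [hq', smul_smul, mul_inv_cancel₀ ht.ne', one_smul]
      rw [hqeq, hShom _ ht.le, hSghom _ ht.le, hPhom _ ht.le, mul_left_comm, mul_left_comm ((n:ℝ)/β)]
      rw [← mul_add]
      exact mul_le_mul_of_nonneg_left key ht.le
  -- extend to all of K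
  obtain ⟨C, hC0, hCW⟩ := claim
  refine ⟨C, hC0, ?_⟩
  intro x hx
  have hxK : x ∈ K := (hKmem x).mpr hx
  have hxsup : x ∈ V ⊔ W' := by
    rw [codisjoint_iff.mp hW'.codisjoint]; trivial
  obtain ⟨p, hpV, w, hwW', hpw⟩ := Submodule.mem_sup.mp hxsup
  have hpK : p ∈ K := (hV ▸ hpV : p ∈ K ⊓ U).1
  have hwK : w ∈ K := by
    have : w = x - p := by rw [← hpw]; ring
    rw [this]; exact K.sub_mem hxK hpK
  have hwW : w ∈ W := ⟨hwK, hwW'⟩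
  have hpJ : ∀ i ∉ J, p i = 0 := (hUmem p).mp (hV ▸ hpV : p ∈ K ⊓ U).2
  -- Sf p ≤ 0
  have hSp : Sf p ≤ 0 := by
    have hsign : ∀ i ∈ Pplus \ J, p i ≤ 0 := by
      intro i hi
      rw [hpJ i (Finset.mem_sdiff.mp hi).2]
    have h1 : Sf p ≤ ξ * Sg p := h p ((hKmem p).mp hpK) hsign
    have hSgp : Sg p = 0 := by
      apply Finset.sum_eq_zero
      intro i hi
      rw [hpJ i (by simpa using hi), abs_zero]
    rw [hSgp, mul_zero] at h1
    exact h1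
  -- x agrees with w off J
  have hxw : ∀ i ∉ J, x i = w i := by
    intro i hi
    rw [← hpw]
    simp [hpJ i hi]
  have hSgxw : Sg x = Sg w := by
    apply Finset.sum_congr rfl
    intro i hi
    rw [hxw i (by simpa using hi)]
  have hPxw : Pf x = Pf w := by
    apply Finset.sum_congr rfl
    intro i hi
    rw [hxw i (Finset.mem_sdiff.mp hi).2]
  have hsx : Sf x ≤ Sf p + Sf w := by
    have : x = p + w := hpw.symm
    rw [this]; exact hSsub p w
  have := hCW w hwW
  calc (∑ i ∈ J ∩ Pplus, x i + ∑ i ∈ J ∩ Pplusᶜ, |x i|) = Sf x := rfl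
  _ ≤ Sf p + Sf w := hsx
  _ ≤ Sf w := by linarith
  _ ≤ ξ' * Sg w + C * Pf w := this
  _ = ξ' * Sg x + C * Pf x := by rw [hSgxw, hPxw]


theorem stmt3 {m n : ℕ} (A : Matrix (Fin m) (Fin n) ℝ) (Pplus : Finset (Fin n))
    (s : ℕ) (hs : 1 ≤ s) (ξ : ℝ) (hξ0 : 0 < ξ) (hξ1 : ξ < 1)
    (h : ∀ J : Finset (Fin n), J.card ≤ s →
      ∀ x : Fin n → ℝ, A.mulVec x = 0 → (∀ i ∈ Pplus \ J, x i ≤ 0) →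
        ∑ i ∈ J ∩ Pplus, x i + ∑ i ∈ J ∩ Pplusᶜ, |x i| ≤ ξ * ∑ i ∈ Jᶜ, |x i|) :
    ∀ ξ' : ℝ, ξ < ξ' → ξ' < 1 →
      ∃ θ : ℝ, 1 ≤ θ ∧ SGCond A Pplus s ξ' θ := by
  intro ξ' hlt hlt1
  have hξ'0 : (0:ℝ) < ξ' := hξ0.trans hlt
  have hex : ∀ J : Finset (Fin n), ∃ θJ : ℝ, 1 ≤ θJ ∧ (J.card ≤ s →
      ∀ x : Fin n → ℝ, A.mulVec x = 0 →
      ∑ i ∈ J ∩ Pplus, x i + ∑ i ∈ J ∩ Pplusᶜ, |x i| ≤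
        ξ' * ∑ i ∈ Jᶜ, |x i| + ξ' * (θJ - 1) * ∑ i ∈ Pplus \ J, max (x i) 0) := by
    intro J
    by_cases hJ : J.card ≤ s
    · obtain ⟨C, hC0, hC⟩ := auxJ A Pplus ξ ξ' hξ0 hlt J (h J hJ)
      refine ⟨1 + C / ξ', by nlinarith [div_nonneg hC0 hξ'0.le], fun _ x hx => ?_⟩
      have he : ξ' * (1 + C / ξ' - 1) = C := by field_simp; ring
      rw [he]
      exact hC x hx
    · exact ⟨1, le_rfl, fun hc => absurd hc hJ⟩
  choose θf hθ1 hθ2 using hex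
  set θ : ℝ := Finset.univ.sup' ⟨∅, Finset.mem_univ ∅⟩ θf with hθ
  have hθJle : ∀ J, θf J ≤ θ := fun J => Finset.le_sup' θf (Finset.mem_univ J)
  have hθge1 : 1 ≤ θ := le_trans (hθ1 ∅) (hθJle ∅)
  refine ⟨θ, hθge1, ?_⟩
  intro x hx J hJ
  have h1 := hθ2 J hJ x hx
  have hP : 0 ≤ ∑ i ∈ Pplus \ J, max (x i) 0 :=
    Finset.sum_nonneg fun i _ => le_max_right _ _
  have hmax : ∀ i, max (-x i) (θ * x i) = |x i| + (θ - 1) * max (x i) 0 :=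
    fun i => max_neg_theta _ _ hθge1
  have e1 : ∑ i ∈ Pplus \ J, max (-x i) (θ * x i)
      = ∑ i ∈ Pplus \ J, |x i| + (θ - 1) * ∑ i ∈ Pplus \ J, max (x i) 0 := by
    rw [Finset.mul_sum, ← Finset.sum_add_distrib]
    exact Finset.sum_congr rfl fun i _ => hmax i
  have hsplit : ∑ i ∈ Jᶜ, |x i| = ∑ i ∈ Pplusᶜ \ J, |x i| + ∑ i ∈ Pplus \ J, |x i| :=
    sum_compl_split J Pplus _
  have h2 : ξ' * (θf J - 1) * ∑ i ∈ Pplus \ J, max (x i) 0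
      ≤ ξ' * (θ - 1) * ∑ i ∈ Pplus \ J, max (x i) 0 := by
    apply mul_le_mul_of_nonneg_right _ hP
    have := hθJle J
    nlinarith
  calc ∑ i ∈ J ∩ Pplus, x i + ∑ i ∈ J ∩ Pplusᶜ, |x i|
      ≤ ξ' * ∑ i ∈ Jᶜ, |x i| + ξ' * (θf J - 1) * ∑ i ∈ Pplus \ J, max (x i) 0 := h1
  _ ≤ ξ' * ∑ i ∈ Jᶜ, |x i| + ξ' * (θ - 1) * ∑ i ∈ Pplus \ J, max (x i) 0 := by linarith
  _ = ξ' * (∑ i ∈ Pplusᶜ \ J, |x i| + ∑ i ∈ Pplus \ J, max (-x i) (θ * x i)) := by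
      rw [e1, hsplit]; ring
end

section
/- Let A be an m×n real matrix, s ≥ 1 an integer, ξ ∈ (0,1), θ ∈ [1,∞), and let ‖·‖ be any norm on ℝ^m. If A satisfies SG_s(ξ,θ), then there exists β ∈ [0,∞) such that A satisfies SG_{s,β}(ξ,θ): for every x ∈ ℝ^n and every subset J of {1,…,n} with Card(J) ≤ s, Σ_{i∈J∩P_+} x_i + Σ_{i∈J∩P_n} |x_i| ≤ β·‖Ax‖ + ξ·(Σ_{i∈P_n∖J} |x_i| + Σ_{i∈P_+∖J} max(−x_i, θ·x_i)). -/
open Finset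

section AuxNorm
variable {m : ℕ} {N : (Fin m → ℝ) → ℝ}

lemma IsNorm.zero (hN : IsNorm N) : N 0 = 0 := by
  have := hN.2.1 0 0; simpa using this

lemma IsNorm.neg (hN : IsNorm N) (x) : N (-x) = N x := by
  have := hN.2.1 (-1) x; simpa using this

lemma IsNorm.nonneg (hN : IsNorm N) (x) : 0 ≤ N x := by
  have h1 := hN.1 x (-x)
  rw [add_neg_cancel, hN.zero, hN.neg] at h1
  linarith

lemma IsNorm.sum_le (hN : IsNorm N) {ι : Type*} [DecidableEq ι] (t : Finset ι)
    (f : ι → Fin m → ℝ) : N (∑ i ∈ t, f i) ≤ ∑ i ∈ t, N (f i) := by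
  induction t using Finset.induction_on with
  | empty => simp [hN.zero]
  | insert _ _ hx ih =>
    rw [Finset.sum_insert hx, Finset.sum_insert hx]
    exact le_trans (hN.1 _ _) (by linarith)

lemma IsNorm.bound (hN : IsNorm N) : ∃ K, 0 ≤ K ∧ ∀ x, N x ≤ K * ‖x‖ := by
  refine ⟨∑ k, N (Pi.single k 1 : Fin m → ℝ), Finset.sum_nonneg fun k _ => hN.nonneg _, fun x => ?_⟩
  have hx : x = ∑ k, x k • (Pi.single k 1 : Fin m → ℝ) := by
    funext j
    simp [Pi.single_apply, Finset.sum_apply]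
  calc N x ≤ ∑ k, N (x k • (Pi.single k 1 : Fin m → ℝ)) := by
        nth_rewrite 1 [hx]; exact hN.sum_le _ _
    _ ≤ ∑ k, ‖x‖ * N (Pi.single k 1 : Fin m → ℝ) := by
        refine Finset.sum_le_sum fun k _ => ?_
        rw [hN.2.1]
        have h1 : |x k| ≤ ‖x‖ := by
          simpa [Real.norm_eq_abs] using norm_le_pi_norm x k
        exact mul_le_mul_of_nonneg_right h1 (hN.nonneg _)
    _ = (∑ k, N (Pi.single k 1 : Fin m → ℝ)) * ‖x‖ := by simp [Finset.sum_mul, mul_comm]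

lemma IsNorm.continuous (hN : IsNorm N) : Continuous N := by
  obtain ⟨K, hK0, hK⟩ := hN.bound
  refine (LipschitzWith.of_dist_le_mul (K := Real.toNNReal K) (f := N) fun x y => ?_).continuous
  rw [Real.dist_eq, dist_eq_norm, Real.coe_toNNReal K hK0]
  have h1 : N x - N y ≤ N (x - y) := by
    have := hN.1 (x - y) y; simp at this; linarith
  have h2 : N y - N x ≤ N (x - y) := by
    have := hN.1 (y - x) x
    rw [sub_add_cancel] at this
    have := hN.neg (x - y)
    simp [neg_sub] at this
    linarith
  have := hK (x - y)
  rw [abs_sub_le_iff]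
  constructor <;> linarith

lemma IsNorm.lower (hN : IsNorm N) (R : Submodule ℝ (Fin m → ℝ)) :
    ∃ c, 0 ≤ c ∧ ∀ y ∈ R, ‖y‖ ≤ c * N y := by
  by_cases hR : ∀ y ∈ R, y = (0 : Fin m → ℝ)
  · exact ⟨1, zero_le_one, fun y hy => by simp [hR y hy, hN.zero]⟩
  · push_neg at hR
    obtain ⟨y₁, hy₁R, hy₁⟩ := hR
    set S : Set (Fin m → ℝ) := {y | y ∈ R ∧ ‖y‖ = 1} with hS
    have hSne : S.Nonempty := by
      refine ⟨‖y₁‖⁻¹ • y₁, R.smul_mem _ hy₁R, ?_⟩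
      rw [norm_smul, norm_inv, norm_norm, inv_mul_cancel₀ (norm_ne_zero_iff.2 hy₁)]
    have hScl : IsClosed S := by
      have h1 : IsClosed {y : Fin m → ℝ | y ∈ R} := R.closed_of_finiteDimensional
      have h2 : IsClosed {y : Fin m → ℝ | ‖y‖ = 1} := isClosed_eq continuous_norm continuous_const
      exact h1.inter h2
    have hSb : Bornology.IsBounded S :=
      (Metric.isBounded_closedBall (x := (0 : Fin m → ℝ)) (r := 1)).subset
        (fun y hy => by simp [Metric.mem_closedBall, dist_eq_norm, hy.2.le])
    have hScomp : IsCompact S := Metric.isCompact_of_isClosed_isBounded hScl hSb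
    obtain ⟨y₀, hy₀S, hmin⟩ := hScomp.exists_isMinOn hSne (hN.continuous.continuousOn)
    have hy₀ : 0 < N y₀ := by
      rcases lt_or_eq_of_le (hN.nonneg y₀) with h | h
      · exact h
      · exfalso
        have h0 : y₀ = 0 := hN.2.2 _ h.symm
        rw [h0] at hy₀S
        simpa using hy₀S.2
    refine ⟨(N y₀)⁻¹, inv_nonneg.2 hy₀.le, fun y hyR => ?_⟩
    by_cases hy : y = 0
    · simp [hy, hN.zero]
    · have hnorm : (0:ℝ) < ‖y‖ := norm_pos_iff.2 hy
      have hyS : ‖y‖⁻¹ • y ∈ S := by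
        refine ⟨R.smul_mem _ hyR, ?_⟩
        rw [norm_smul, norm_inv, norm_norm, inv_mul_cancel₀ hnorm.ne']
      have h1 : N y₀ ≤ N (‖y‖⁻¹ • y) := hmin hyS
      rw [hN.2.1, abs_inv, abs_norm] at h1
      -- h1 : N y₀ ≤ ‖y‖⁻¹ * N y ; goal ‖y‖ ≤ (N y₀)⁻¹ * N y
      rw [inv_mul_eq_div, le_div_iff₀ hy₀]
      calc ‖y‖ * N y₀ ≤ ‖y‖ * (‖y‖⁻¹ * N y) := mul_le_mul_of_nonneg_left h1 hnorm.le
        _ = N y := by field_simp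

end AuxNorm

lemma section_exists {m n : ℕ} (A : Matrix (Fin m) (Fin n) ℝ)
    {N : (Fin m → ℝ) → ℝ} (hN : IsNorm N) :
    ∃ C : ℝ, 0 ≤ C ∧ ∀ x : Fin n → ℝ, ∃ u : Fin n → ℝ,
      A.mulVec u = A.mulVec x ∧ ‖u‖ ≤ C * N (A.mulVec x) := by
  classical
  set T := Matrix.mulVecLin A with hT
  have hsurj : LinearMap.range T.rangeRestrict = ⊤ := LinearMap.range_rangeRestrict T
  obtain ⟨g, hg⟩ := T.rangeRestrict.exists_rightInverse_of_surjective hsurj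
  set G := LinearMap.toContinuousLinearMap g with hG
  obtain ⟨c, hc0, hc⟩ := hN.lower (LinearMap.range T)
  refine ⟨‖G‖ * c, mul_nonneg (ContinuousLinearMap.opNorm_nonneg G) hc0, fun x => ?_⟩
  have hmem : A.mulVec x ∈ LinearMap.range T := ⟨x, rfl⟩
  set y : LinearMap.range T := ⟨A.mulVec x, hmem⟩ with hy
  refine ⟨g y, ?_, ?_⟩
  · have := congrArg (fun h => h y) hg
    simp only [LinearMap.comp_apply, LinearMap.id_apply] at this
    have h2 : T.rangeRestrict (g y) = y := this
    have h3 : T (g y) = (y : Fin m → ℝ) := congrArg Subtype.val h2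
    exact h3
  · have h1 : ‖g y‖ ≤ ‖G‖ * ‖y‖ := G.le_opNorm y
    have h2 : ‖y‖ = ‖A.mulVec x‖ := rfl
    have h3 : ‖A.mulVec x‖ ≤ c * N (A.mulVec x) := hc _ hmem
    calc ‖g y‖ ≤ ‖G‖ * ‖A.mulVec x‖ := by rw [← h2]; exact h1
      _ ≤ ‖G‖ * (c * N (A.mulVec x)) := mul_le_mul_of_nonneg_left h3 (ContinuousLinearMap.opNorm_nonneg G)
      _ = ‖G‖ * c * N (A.mulVec x) := by ring

theorem stmt4 {m n : ℕ} (A : Matrix (Fin m) (Fin n) ℝ) (Pplus : Finset (Fin n))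
    (s : ℕ) (hs : 1 ≤ s) (ξ θ : ℝ) (hξ0 : 0 < ξ) (hξ1 : ξ < 1) (hθ : 1 ≤ θ)
    (N : (Fin m → ℝ) → ℝ) (hN : IsNorm N)
    (h : SGCond A Pplus s ξ θ) :
    ∃ β : ℝ, 0 ≤ β ∧ SGbCond A Pplus s ξ θ β N := by
  obtain ⟨C, hC0, hC⟩ := section_exists A hN
  refine ⟨(2 + ξ * (1 + θ)) * n * C, by positivity, fun x J hJ => ?_⟩
  obtain ⟨u, hAu, hu⟩ := hC x
  set x0 : Fin n → ℝ := x - u with hx0def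
  have hx0 : A.mulVec x0 = 0 := by
    rw [hx0def, Matrix.mulVec_sub, hAu, sub_self]
  have key := h x0 hx0 J hJ
  set U : ℝ := ∑ i, |u i| with hUdef
  have hUnn : 0 ≤ U := Finset.sum_nonneg fun i _ => abs_nonneg _
  have hsub : ∀ (t : Finset (Fin n)), ∑ i ∈ t, |u i| ≤ U :=
    fun t => Finset.sum_le_sum_of_subset_of_nonneg (Finset.subset_univ t)
      (fun i _ _ => abs_nonneg _)
  have hx0i : ∀ i, x0 i = x i - u i := fun i => rfl
  -- LHS bound
  have hL1 : ∑ i ∈ J ∩ Pplus, x i ≤ ∑ i ∈ J ∩ Pplus, x0 i + U := by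
    calc ∑ i ∈ J ∩ Pplus, x i ≤ ∑ i ∈ J ∩ Pplus, (x0 i + |u i|) := by
          refine Finset.sum_le_sum fun i _ => ?_
          have := le_abs_self (u i); rw [hx0i]; linarith
      _ = ∑ i ∈ J ∩ Pplus, x0 i + ∑ i ∈ J ∩ Pplus, |u i| := Finset.sum_add_distrib
      _ ≤ _ := by linarith [hsub (J ∩ Pplus)]
  have hL2 : ∑ i ∈ J ∩ Pplusᶜ, |x i| ≤ ∑ i ∈ J ∩ Pplusᶜ, |x0 i| + U := by
    calc ∑ i ∈ J ∩ Pplusᶜ, |x i| ≤ ∑ i ∈ J ∩ Pplusᶜ, (|x0 i| + |u i|) := by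
          refine Finset.sum_le_sum fun i _ => ?_
          rw [hx0i]
          calc |x i| = |(x i - u i) + u i| := by ring_nf
            _ ≤ |x i - u i| + |u i| := abs_add_le _ _
      _ = ∑ i ∈ J ∩ Pplusᶜ, |x0 i| + ∑ i ∈ J ∩ Pplusᶜ, |u i| := Finset.sum_add_distrib
      _ ≤ _ := by linarith [hsub (J ∩ Pplusᶜ)]
  -- RHS bounds
  have hR1 : ∑ i ∈ Pplusᶜ \ J, |x0 i| ≤ ∑ i ∈ Pplusᶜ \ J, |x i| + U := by
    calc ∑ i ∈ Pplusᶜ \ J, |x0 i| ≤ ∑ i ∈ Pplusᶜ \ J, (|x i| + |u i|) := by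
          refine Finset.sum_le_sum fun i _ => ?_
          rw [hx0i]
          exact abs_sub _ _
      _ = ∑ i ∈ Pplusᶜ \ J, |x i| + ∑ i ∈ Pplusᶜ \ J, |u i| := Finset.sum_add_distrib
      _ ≤ _ := by linarith [hsub (Pplusᶜ \ J)]
  have hR2 : ∑ i ∈ Pplus \ J, max (-x0 i) (θ * x0 i) ≤
      ∑ i ∈ Pplus \ J, max (-x i) (θ * x i) + θ * U := by
    calc ∑ i ∈ Pplus \ J, max (-x0 i) (θ * x0 i)
        ≤ ∑ i ∈ Pplus \ J, (max (-x i) (θ * x i) + θ * |u i|) := by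
          refine Finset.sum_le_sum fun i _ => ?_
          rw [hx0i]
          refine max_le ?_ ?_
          · nlinarith [le_max_left (-x i) (θ * x i), le_abs_self (u i), abs_nonneg (u i)]
          · nlinarith [le_max_right (-x i) (θ * x i), neg_abs_le (u i), abs_nonneg (u i)]
      _ = ∑ i ∈ Pplus \ J, max (-x i) (θ * x i) + θ * ∑ i ∈ Pplus \ J, |u i| := by
          rw [Finset.sum_add_distrib, Finset.mul_sum]
      _ ≤ _ := by nlinarith [hsub (Pplus \ J)]
  -- combine
  have hkey2 : ξ * (∑ i ∈ Pplusᶜ \ J, |x0 i| + ∑ i ∈ Pplus \ J, max (-x0 i) (θ * x0 i)) ≤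
      ξ * (∑ i ∈ Pplusᶜ \ J, |x i| + ∑ i ∈ Pplus \ J, max (-x i) (θ * x i)) +
        ξ * (1 + θ) * U := by nlinarith [hR1, hR2]
  have hUC : U ≤ (n : ℝ) * C * N (A.mulVec x) := by
    have h1 : U ≤ (n : ℝ) * ‖u‖ := by
      have := Finset.sum_le_card_nsmul Finset.univ (fun i => |u i|) ‖u‖
        (fun i _ => by simpa [Real.norm_eq_abs] using norm_le_pi_norm u i)
      simpa [nsmul_eq_mul] using this
    calc U ≤ (n : ℝ) * ‖u‖ := h1
      _ ≤ (n : ℝ) * (C * N (A.mulVec x)) := by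
          exact mul_le_mul_of_nonneg_left hu (Nat.cast_nonneg n)
      _ = (n : ℝ) * C * N (A.mulVec x) := by ring
  have hNnn : 0 ≤ N (A.mulVec x) := hN.nonneg _
  have hcoef : (0:ℝ) ≤ 2 + ξ * (1 + θ) := by nlinarith
  nlinarith [hL1, hL2, key, hkey2, hUC, mul_le_mul_of_nonneg_left hUC hcoef]
end

section
/- Let A be an m×n real matrix satisfying SG_{s,β}(ξ,θ) with ξ ∈ (0,1), β ∈ [0,∞), θ ∈ [1,∞) for a norm ‖·‖ on ℝ^m. Let w ∈ ℝ^n satisfy w_i ≥ 0 for all i ∈ P_+ and ‖w − w^s‖₁ ≤ μ, where w^s is obtained from w by zeroing all but the s largest-in-magnitude entries. Let y ∈ ℝ^m satisfy ‖Aw − y‖ ≤ ε. Let x ∈ ℝ^n satisfy x_i ≥ 0 for all i ∈ P_+, ‖Ax − y‖ ≤ δ, and ‖x‖₁ ≤ Opt + ν, where Opt = min{‖z‖₁ : ‖Az − y‖ ≤ ε, z_i ≥ 0 for all i ∈ P_+}. Then ‖x − w‖₁ ≤ ((1+ξ)/(1−ξ))·ν + (2(1+ξθ)/(1−ξ))·μ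 + (2β/(1−ξ))·(ε + δ). -/
open Finset

set_option maxHeartbeats 2000000 in
theorem stmt5 {m n : ℕ} (A : Matrix (Fin m) (Fin n) ℝ) (Pplus : Finset (Fin n))
    (s : ℕ) (ξ θ β : ℝ) (hξ0 : 0 < ξ) (hξ1 : ξ < 1) (hβ : 0 ≤ β) (hθ : 1 ≤ θ)
    (N : (Fin m → ℝ) → ℝ) (hN : IsNorm N)
    (hSG : SGbCond A Pplus s ξ θ β N)
    (w : Fin n → ℝ) (μ : ℝ) (hw : ∀ i ∈ Pplus, 0 ≤ w i)
    (hμ : (∑ i, |w i|) - normS1 s w ≤ μ)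
    (y : Fin m → ℝ) (ε : ℝ) (hε : N (A.mulVec w - y) ≤ ε)
    (x : Fin n → ℝ) (ν δ : ℝ) (hx : ∀ i ∈ Pplus, 0 ≤ x i)
    (hδ : N (A.mulVec x - y) ≤ δ)
    (hopt : (∑ i, |x i|) ≤
      sInf {r : ℝ | ∃ z : Fin n → ℝ,
        N (A.mulVec z - y) ≤ ε ∧ (∀ i ∈ Pplus, 0 ≤ z i) ∧ r = ∑ i, |z i|} + ν) :
    (∑ i, |x i - w i|) ≤
      (1 + ξ) / (1 - ξ) * ν + 2 * (1 + ξ * θ) / (1 - ξ) * μ + 2 * β / (1 - ξ) * (ε + δ) := by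
  classical
  obtain ⟨hNadd, hNsmul, -⟩ := hN
  have h1ξ : (0:ℝ) < 1 - ξ := by linarith
  -- choose J attaining normS1
  obtain ⟨J, hJmem, hJeq⟩ := Finset.exists_mem_eq_sup'
    (⟨∅, by simp⟩ : (Finset.univ.powerset.filter
      (fun J : Finset (Fin n) => J.card ≤ s)).Nonempty)
    (fun J => ∑ i ∈ J, |w i|)
  have hJcard : J.card ≤ s := (Finset.mem_filter.1 hJmem).2
  have hμJ : ∑ i ∈ Finset.univ \ J, |w i| ≤ μ := by
    have h := Finset.sum_sdiff (Finset.subset_univ J) (f := fun i => |w i|)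
    have h2 : normS1 s w = ∑ i ∈ J, |w i| := hJeq
    rw [h2] at hμ
    linarith
  -- abbreviations
  set p := ∑ i ∈ J ∩ Pplus, max (x i - w i) 0 with hp_def
  set q := ∑ i ∈ J ∩ Pplus, max (w i - x i) 0 with hq_def
  set b := ∑ i ∈ J ∩ Pplusᶜ, |x i - w i| with hb_def
  set d := ∑ i ∈ Pplusᶜ \ J, |x i - w i| with hd_def
  set r := ∑ i ∈ Pplus \ J, max (x i - w i) 0 with hr_def
  set t := ∑ i ∈ Pplus \ J, max (w i - x i) 0 with ht_def
  set m1 := ∑ i ∈ Pplus \ J, w i with hm1_def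
  set m2 := ∑ i ∈ Pplusᶜ \ J, |w i| with hm2_def
  -- partition of univ
  have hd1 : Disjoint (J ∩ Pplus) (J ∩ Pplusᶜ) := by
    rw [Finset.disjoint_left]; intro i hi hi'
    simp only [Finset.mem_inter, Finset.mem_compl] at hi hi'; tauto
  have hd2 : Disjoint (Pplus \ J) (Pplusᶜ \ J) := by
    rw [Finset.disjoint_left]; intro i hi hi'
    simp only [Finset.mem_sdiff, Finset.mem_compl] at hi hi'; tauto
  have hd3 : Disjoint ((J ∩ Pplus) ∪ (J ∩ Pplusᶜ)) ((Pplus \ J) ∪ (Pplusᶜ \ J)) := by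
    rw [Finset.disjoint_left]; intro i hi hi'
    simp only [Finset.mem_union, Finset.mem_inter, Finset.mem_sdiff,
      Finset.mem_compl] at hi hi'; tauto
  have hsplit : ∀ f : Fin n → ℝ, ∑ i, f i =
      (∑ i ∈ J ∩ Pplus, f i + ∑ i ∈ J ∩ Pplusᶜ, f i) +
      (∑ i ∈ Pplus \ J, f i + ∑ i ∈ Pplusᶜ \ J, f i) := by
    intro f
    rw [← Finset.sum_union hd1, ← Finset.sum_union hd2, ← Finset.sum_union hd3]
    apply Finset.sum_congr _ (fun _ _ => rfl)
    ext i
    simp only [Finset.mem_union, Finset.mem_inter, Finset.mem_sdiff, Finset.mem_compl,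
      Finset.mem_univ, iff_true]
    tauto
  -- m1 + m2 ≤ μ
  have hm12 : m1 + m2 ≤ μ := by
    have he : Pplus \ J ∪ Pplusᶜ \ J = Finset.univ \ J := by
      ext i
      simp only [Finset.mem_union, Finset.mem_sdiff, Finset.mem_compl, Finset.mem_univ,
        true_and]
      tauto
    have hm1e : m1 = ∑ i ∈ Pplus \ J, |w i| := by
      apply Finset.sum_congr rfl
      intro i hi
      exact (abs_of_nonneg (hw i (Finset.mem_sdiff.1 hi).1)).symm
    rw [hm1e]
    rw [← Finset.sum_union hd2, he]
    exact hμJ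
  -- pointwise abs identity
  have habs : ∀ v : ℝ, |v| = max (v) 0 + max (-v) 0 := by
    intro v
    rcases le_total 0 v with h | h
    · rw [abs_of_nonneg h, max_eq_left h, max_eq_right (by linarith)]; ring
    · rw [abs_of_nonpos h, max_eq_right h, max_eq_left (by linarith)]; ring
  -- decomposition of the error
  have hZ : ∑ i, |x i - w i| = ((p + q) + b) + ((r + t) + d) := by
    rw [hsplit (fun i => |x i - w i|)]
    have e1 : ∑ i ∈ J ∩ Pplus, |x i - w i| = p + q := by
      rw [hp_def, hq_def, ← Finset.sum_add_distrib]
      apply Finset.sum_congr rfl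
      intro i _
      rw [habs (x i - w i)]
      congr 1
      ring_nf
    have e3 : ∑ i ∈ Pplus \ J, |x i - w i| = r + t := by
      rw [hr_def, ht_def, ← Finset.sum_add_distrib]
      apply Finset.sum_congr rfl
      intro i _
      rw [habs (x i - w i)]
      congr 1
      ring_nf
    rw [e1, e3]
  -- nonnegativity
  have hp0 : 0 ≤ p := Finset.sum_nonneg (fun i _ => le_max_right _ _)
  have hq0 : 0 ≤ q := Finset.sum_nonneg (fun i _ => le_max_right _ _)
  have hr0 : 0 ≤ r := Finset.sum_nonneg (fun i _ => le_max_right _ _)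
  have ht0 : 0 ≤ t := Finset.sum_nonneg (fun i _ => le_max_right _ _)
  have hb0 : 0 ≤ b := Finset.sum_nonneg (fun i _ => abs_nonneg _)
  have hd0 : 0 ≤ d := Finset.sum_nonneg (fun i _ => abs_nonneg _)
  have hm10 : 0 ≤ m1 := Finset.sum_nonneg (fun i hi => hw i (Finset.mem_sdiff.1 hi).1)
  have hm20 : 0 ≤ m2 := Finset.sum_nonneg (fun i _ => abs_nonneg _)
  -- t ≤ m1
  have htm1 : t ≤ m1 := by
    apply Finset.sum_le_sum
    intro i hi
    have hiP : i ∈ Pplus := (Finset.mem_sdiff.1 hi).1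
    have h1 := hx i hiP
    have h2 := hw i hiP
    apply max_le <;> linarith
  -- optimality: ∑|x| ≤ ∑|w| + ν
  have hxle : ∑ i, |x i| ≤ (∑ i, |w i|) + ν := by
    have hbdd : BddBelow {r : ℝ | ∃ z : Fin n → ℝ,
        N (A.mulVec z - y) ≤ ε ∧ (∀ i ∈ Pplus, 0 ≤ z i) ∧ r = ∑ i, |z i|} := by
      refine ⟨0, ?_⟩
      rintro ρ ⟨z, -, -, rfl⟩
      exact Finset.sum_nonneg (fun i _ => abs_nonneg _)
    have hmem : (∑ i, |w i|) ∈ {r : ℝ | ∃ z : Fin n → ℝ,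
        N (A.mulVec z - y) ≤ ε ∧ (∀ i ∈ Pplus, 0 ≤ z i) ∧ r = ∑ i, |z i|} :=
      ⟨w, hε, hw, rfl⟩
    have := csInf_le hbdd hmem
    linarith
  -- C2
  have hC2 : p - q + (r - t) + (-b) + (d - 2*m2) ≤ ν := by
    have key : p - q + (r - t) + (-b) + (d - 2*m2) ≤ ∑ i, (|x i| - |w i|) := by
      rw [hsplit (fun i => |x i| - |w i|)]
      have e1 : ∑ i ∈ J ∩ Pplus, (|x i| - |w i|) = p - q := by
        rw [hp_def, hq_def, ← Finset.sum_sub_distrib]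
        apply Finset.sum_congr rfl
        intro i hi
        have hiP : i ∈ Pplus := (Finset.mem_inter.1 hi).2
        rw [abs_of_nonneg (hx i hiP), abs_of_nonneg (hw i hiP)]
        rcases le_total (x i) (w i) with h | h
        · rw [max_eq_right (by linarith), max_eq_left (by linarith)]; ring
        · rw [max_eq_left (by linarith), max_eq_right (by linarith)]; ring
      have e3 : ∑ i ∈ Pplus \ J, (|x i| - |w i|) = r - t := by
        rw [hr_def, ht_def, ← Finset.sum_sub_distrib]
        apply Finset.sum_congr rfl
        intro i hi
        have hiP : i ∈ Pplus := (Finset.mem_sdiff.1 hi).1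
        rw [abs_of_nonneg (hx i hiP), abs_of_nonneg (hw i hiP)]
        rcases le_total (x i) (w i) with h | h
        · rw [max_eq_right (by linarith), max_eq_left (by linarith)]; ring
        · rw [max_eq_left (by linarith), max_eq_right (by linarith)]; ring
      have e2 : -b ≤ ∑ i ∈ J ∩ Pplusᶜ, (|x i| - |w i|) := by
        rw [hb_def, ← Finset.sum_neg_distrib]
        apply Finset.sum_le_sum
        intro i _
        have := abs_sub_abs_le_abs_sub (w i) (x i)
        rw [abs_sub_comm (w i) (x i)] at this
        linarith
      have e4 : d - 2*m2 ≤ ∑ i ∈ Pplusᶜ \ J, (|x i| - |w i|) := by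
        have : d - 2*m2 = ∑ i ∈ Pplusᶜ \ J, (|x i - w i| - 2 * |w i|) := by
          rw [hd_def, hm2_def, Finset.sum_sub_distrib, ← Finset.mul_sum]
        rw [this]
        apply Finset.sum_le_sum
        intro i _
        have := abs_sub (x i) (w i)
        linarith
      rw [e1, e3]
      linarith [e2, e4]
    have h2 : ∑ i, (|x i| - |w i|) ≤ ν := by
      rw [Finset.sum_sub_distrib]
      linarith
    linarith
  -- norm of residual
  have hΔ : N (A.mulVec (fun i => w i - x i)) ≤ ε + δ := by
    have h1 : A.mulVec (fun i => w i - x i) = (A.mulVec w - y) - (A.mulVec x - y) := by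
      have h0 : (fun i => w i - x i) = w - x := rfl
      rw [h0, Matrix.mulVec_sub, sub_sub_sub_cancel_right]
    rw [h1, sub_eq_add_neg]
    have h2 : N (-(A.mulVec x - y)) = N (A.mulVec x - y) := by
      have h3 : -(A.mulVec x - y) = (-1 : ℝ) • (A.mulVec x - y) := by
        simp [neg_one_smul]
      rw [h3, hNsmul]
      simp
    calc N ((A.mulVec w - y) + -(A.mulVec x - y))
        ≤ N (A.mulVec w - y) + N (-(A.mulVec x - y)) := hNadd _ _
      _ = N (A.mulVec w - y) + N (A.mulVec x - y) := by rw [h2]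
      _ ≤ ε + δ := add_le_add hε hδ
  -- apply SG to w - x with J₁
  set J₁ := (J ∩ Pplusᶜ) ∪ (J ∩ Pplus).filter (fun i => x i ≤ w i) with hJ₁_def
  have hJ₁sub : J₁ ⊆ J := by
    apply Finset.union_subset Finset.inter_subset_left
    exact (Finset.filter_subset _ _).trans Finset.inter_subset_left
  have hJ₁card : J₁.card ≤ s := le_trans (Finset.card_le_card hJ₁sub) hJcard
  have hSG1 := hSG (fun i => w i - x i) J₁ hJ₁card
  -- identify the four sums
  have s1 : ∑ i ∈ J₁ ∩ Pplus, (w i - x i) = q := by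
    have hset : J₁ ∩ Pplus = (J ∩ Pplus).filter (fun i => x i ≤ w i) := by
      ext i
      simp only [hJ₁_def, Finset.mem_inter, Finset.mem_union, Finset.mem_filter,
        Finset.mem_compl]
      tauto
    rw [hset, Finset.sum_filter, hq_def]
    apply Finset.sum_congr rfl
    intro i _
    split_ifs with h
    · rw [max_eq_left (show (0:ℝ) ≤ w i - x i by linarith)]
    · push_neg at h
      rw [max_eq_right (show w i - x i ≤ (0:ℝ) by linarith)]
  have s2 : ∑ i ∈ J₁ ∩ Pplusᶜ, |w i - x i| = b := by
    have hset : J₁ ∩ Pplusᶜ = J ∩ Pplusᶜ := by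
      ext i
      simp only [hJ₁_def, Finset.mem_inter, Finset.mem_union, Finset.mem_filter,
        Finset.mem_compl]
      tauto
    rw [hset, hb_def]
    exact Finset.sum_congr rfl (fun i _ => abs_sub_comm _ _)
  have s4 : ∑ i ∈ Pplusᶜ \ J₁, |w i - x i| = d := by
    have hset : Pplusᶜ \ J₁ = Pplusᶜ \ J := by
      ext i
      simp only [hJ₁_def, Finset.mem_sdiff, Finset.mem_union, Finset.mem_inter,
        Finset.mem_filter, Finset.mem_compl]
      tauto
    rw [hset, hd_def]
    exact Finset.sum_congr rfl (fun i _ => abs_sub_comm _ _)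
  have s3 : ∑ i ∈ Pplus \ J₁, max (-(w i - x i)) (θ * (w i - x i)) ≤
      ((r + t) + (θ - 1) * m1) + p := by
    have hset : Pplus \ J₁ = (Pplus \ J) ∪ (J ∩ Pplus).filter (fun i => ¬ x i ≤ w i) := by
      ext i
      simp only [hJ₁_def, Finset.mem_sdiff, Finset.mem_union, Finset.mem_inter,
        Finset.mem_filter, Finset.mem_compl]
      tauto
    have hdisj : Disjoint (Pplus \ J) ((J ∩ Pplus).filter (fun i => ¬ x i ≤ w i)) := by
      rw [Finset.disjoint_left]
      intro i hi hi'
      simp only [Finset.mem_sdiff, Finset.mem_filter, Finset.mem_inter] at hi hi'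
      tauto
    rw [hset, Finset.sum_union hdisj]
    have hA : ∑ i ∈ Pplus \ J, max (-(w i - x i)) (θ * (w i - x i)) ≤
        (r + t) + (θ - 1) * m1 := by
      have hrhs : (r + t) + (θ - 1) * m1 =
          ∑ i ∈ Pplus \ J, ((max (x i - w i) 0 + max (w i - x i) 0) + (θ - 1) * w i) := by
        rw [hr_def, ht_def, hm1_def, Finset.sum_add_distrib, Finset.sum_add_distrib,
          ← Finset.mul_sum]
      rw [hrhs]
      apply Finset.sum_le_sum
      intro i hi
      have hiP : i ∈ Pplus := (Finset.mem_sdiff.1 hi).1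
      have h1 := hx i hiP
      have h2 := hw i hiP
      have h3 : 1 * x i ≤ θ * x i := mul_le_mul_of_nonneg_right hθ h1
      have h4 : 1 * w i ≤ θ * w i := mul_le_mul_of_nonneg_right hθ h2
      have h5 : x i - w i ≤ max (x i - w i) 0 := le_max_left _ _
      have h6 : w i - x i ≤ max (w i - x i) 0 := le_max_left _ _
      have h7 : (0:ℝ) ≤ max (x i - w i) 0 := le_max_right _ _
      have h8 : (0:ℝ) ≤ max (w i - x i) 0 := le_max_right _ _
      apply max_le
      · nlinarith
      · nlinarith
    have hB : ∑ i ∈ (J ∩ Pplus).filter (fun i => ¬ x i ≤ w i),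
        max (-(w i - x i)) (θ * (w i - x i)) = p := by
      rw [hp_def]
      rw [Finset.sum_filter]
      apply Finset.sum_congr rfl
      intro i _
      by_cases h : x i ≤ w i
      · rw [if_neg (not_not_intro h),
          max_eq_right (show x i - w i ≤ (0:ℝ) by linarith)]
      · have hlt : w i < x i := not_le.1 h
        have hwx : w i - x i ≤ 0 := by linarith
        have h10 := mul_le_mul_of_nonpos_right hθ hwx
        have h9 : θ * (w i - x i) ≤ -(w i - x i) := by linarith
        rw [if_pos h, max_eq_left h9,
          max_eq_left (show (0:ℝ) ≤ x i - w i by linarith)]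
        ring
    linarith [hA, hB.le, hB.ge]
  -- C1
  have hC1 : q + b ≤ β * (ε + δ) + ξ * (d + (((r + t) + (θ - 1) * m1) + p)) := by
    rw [s1, s2] at hSG1
    rw [s4] at hSG1
    have h1 : β * N (A.mulVec fun i => w i - x i) ≤ β * (ε + δ) :=
      mul_le_mul_of_nonneg_left hΔ hβ
    have h2 : ξ * (d + ∑ i ∈ Pplus \ J₁, max (-(w i - x i)) (θ * (w i - x i))) ≤
        ξ * (d + (((r + t) + (θ - 1) * m1) + p)) := by
      apply mul_le_mul_of_nonneg_left _ hξ0.le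
      linarith [s3]
    exact hSG1.trans (add_le_add h1 h2)
  -- final arithmetic
  have HC2 : (1+ξ) * (p - q + (r - t) + (-b) + (d - 2*m2)) ≤ (1+ξ) * ν :=
    mul_le_mul_of_nonneg_left hC2 (by linarith)
  have HT : (2+2*ξ) * t ≤ (2+2*ξ) * m1 :=
    mul_le_mul_of_nonneg_left htm1 (by linarith)
  have HM : 2*(1+ξ*θ)*m1 + 2*(1+ξ)*m2 ≤ 2*(1+ξ*θ)*μ := by
    have h1 : (0:ℝ) ≤ 1 + ξ*θ := by nlinarith
    have h2 := mul_le_mul_of_nonneg_left hm12 (by linarith : (0:ℝ) ≤ 2*(1+ξ*θ))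
    have h3 : 0 ≤ 2*(ξ*(θ-1))*m2 := by
      apply mul_nonneg _ hm20
      nlinarith
    nlinarith
  have key : (1-ξ) * (((p + q) + b) + ((r + t) + d)) ≤
      2*β*(ε+δ) + (1+ξ)*ν + 2*(1+ξ*θ)*μ := by
    linarith [hC1, HC2, HT, HM]
  rw [hZ]
  have hrhs : (1 + ξ) / (1 - ξ) * ν + 2 * (1 + ξ * θ) / (1 - ξ) * μ +
      2 * β / (1 - ξ) * (ε + δ) =
      (2*β*(ε+δ) + (1+ξ)*ν + 2*(1+ξ*θ)*μ) / (1 - ξ) := by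
    field_simp
    ring
  rw [hrhs, le_div_iff₀ h1ξ]
  linarith [key]
end

section
/- Let A be an m×n real matrix satisfying SG_{s,β}(ξ) with ξ ∈ (0,1), β ∈ [0,∞) for a norm ‖·‖ on ℝ^m, and let α be the maximum of the ‖·‖-norms of the columns of A. Let w ∈ ℝ^n satisfy w_i ≥ 0 for all i ∈ P_+ and ‖w − w^s‖₁ ≤ μ, where w^s is obtained from w by zeroing all but the s largest-in-magnitude entries. Let y ∈ ℝ^m satisfy ‖Aw − y‖ ≤ ε. Let x ∈ ℝ^n satisfy x_i ≥ 0 for all i ∈ P_+, ‖Ax − y‖ ≤ δ, and ‖x‖₁ ≤ Opt + ν, where Opt = min{‖z‖₁ : ‖Az − y‖ ≤ ε, z_i ≥ 0 for all i ∈ P_+}. Then ‖x − w‖₁ ≤ ((1+ξ)/(1−ξ))·ν + (2(1+βα)/(1−ξ))·μ + (2β/(1−ξ))·(ε + δ). -/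
open Finset

lemma myN_zero {m : ℕ} {N : (Fin m → ℝ) → ℝ} (hN : IsNorm N) : N 0 = 0 := by
  have h := hN.2.1 0 0
  simpa using h

lemma myN_neg {m : ℕ} {N : (Fin m → ℝ) → ℝ} (hN : IsNorm N) (u : Fin m → ℝ) :
    N (-u) = N u := by
  have h := hN.2.1 (-1) u
  simpa using h

lemma myN_nonneg {m : ℕ} {N : (Fin m → ℝ) → ℝ} (hN : IsNorm N) (u : Fin m → ℝ) :
    0 ≤ N u := by
  have h := hN.1 u (-u)
  rw [add_neg_cancel, myN_zero hN, myN_neg hN] at h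
  linarith

lemma myN_sub {m : ℕ} {N : (Fin m → ℝ) → ℝ} (hN : IsNorm N) (p q : Fin m → ℝ) :
    N (p - q) ≤ N p + N q := by
  have h := hN.1 p (-q)
  rw [myN_neg hN] at h
  simpa [sub_eq_add_neg] using h

lemma myN_sum {m : ℕ} {N : (Fin m → ℝ) → ℝ} (hN : IsNorm N) {ι : Type*}
    (t : Finset ι) (f : ι → Fin m → ℝ) :
    N (∑ i ∈ t, f i) ≤ ∑ i ∈ t, N (f i) := by
  classical
  induction t using Finset.induction with
  | empty => simp [myN_zero hN]
  | insert _ _ ha ih =>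
      rw [Finset.sum_insert ha, Finset.sum_insert ha]
      exact (hN.1 _ _).trans (by linarith)

theorem stmt6 {m n : ℕ} (A : Matrix (Fin m) (Fin n) ℝ) (Pplus : Finset (Fin n))
    (s : ℕ) (ξ β : ℝ) (hξ0 : 0 < ξ) (hξ1 : ξ < 1) (hβ : 0 ≤ β)
    (N : (Fin m → ℝ) → ℝ) (hN : IsNorm N)
    (hSG : SGbCondSign A Pplus s ξ β N)
    (α : ℝ) (hα : IsGreatest {r : ℝ | ∃ j : Fin n, r = N (fun k => A k j)} α)
    (w : Fin n → ℝ) (μ : ℝ) (hw : ∀ i ∈ Pplus, 0 ≤ w i)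
    (hμ : (∑ i, |w i|) - normS1 s w ≤ μ)
    (y : Fin m → ℝ) (ε : ℝ) (hε : N (A.mulVec w - y) ≤ ε)
    (x : Fin n → ℝ) (ν δ : ℝ) (hx : ∀ i ∈ Pplus, 0 ≤ x i)
    (hδ : N (A.mulVec x - y) ≤ δ)
    (hopt : (∑ i, |x i|) ≤
      sInf {r : ℝ | ∃ z : Fin n → ℝ,
        N (A.mulVec z - y) ≤ ε ∧ (∀ i ∈ Pplus, 0 ≤ z i) ∧ r = ∑ i, |z i|} + ν) :
    (∑ i, |x i - w i|) ≤
      (1 + ξ) / (1 - ξ) * ν + 2 * (1 + β * α) / (1 - ξ) * μ + 2 * β / (1 - ξ) * (ε + δ) := by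
  classical
  obtain ⟨j₀, hj₀⟩ := hα.1
  have hα0 : 0 ≤ α := by rw [hj₀]; exact myN_nonneg hN _
  have hcol : ∀ j, N (fun k => A k j) ≤ α := fun j => hα.2 ⟨j, rfl⟩
  -- maximizer J of normS1
  have hne : (Finset.univ.powerset.filter fun J : Finset (Fin n) => J.card ≤ s).Nonempty :=
    ⟨∅, by simp⟩
  obtain ⟨J, hJmem, hJeq⟩ := Finset.exists_mem_eq_sup' hne (fun J => ∑ i ∈ J, |w i|)
  have hJcard : J.card ≤ s := (Finset.mem_filter.mp hJmem).2
  have hnormJ : normS1 s w = ∑ i ∈ J, |w i| := hJeq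
  have htail : ∑ i ∈ Jᶜ, |w i| ≤ μ := by
    have h1 := Finset.sum_add_sum_compl J (fun i => |w i|)
    rw [hnormJ] at hμ
    linarith
  set h0 : Fin n → ℝ := fun i =>
      if i ∈ J then 0 else if i ∈ Pplus then max (w i - x i) 0 else w i with hh0def
  set v : Fin n → ℝ := fun i => (w i - x i) - h0 i with hvdef
  set J' : Finset (Fin n) := J.filter (fun i => x i ≤ w i ∨ i ∉ Pplus) with hJ'def
  have hJ'sub : J' ⊆ J := Finset.filter_subset _ _
  have hJ'card : J'.card ≤ s := le_trans (Finset.card_le_card hJ'sub) hJcard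
  have hh0J' : ∀ i ∈ J', h0 i = 0 := by
    intro i hi; simp [hh0def, hJ'sub hi]
  set M := ∑ i, |h0 i| with hMdef
  have hM0 : 0 ≤ M := Finset.sum_nonneg fun i _ => abs_nonneg _
  have hMμ : M ≤ μ := by
    have h1 : ∀ i ∈ J, |h0 i| = 0 := by intro i hi; simp [hh0def, hi]
    have h2 : ∀ i ∈ Jᶜ, |h0 i| ≤ |w i| := by
      intro i hi
      have hiJ : i ∉ J := Finset.mem_compl.mp hi
      by_cases hiP : i ∈ Pplus
      · have hwi : 0 ≤ w i := hw i hiP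
        have hxi : 0 ≤ x i := hx i hiP
        simp only [hh0def, if_neg hiJ, if_pos hiP]
        rw [abs_of_nonneg (le_max_right _ _), abs_of_nonneg hwi]
        exact max_le (by linarith) hwi
      · simp [hh0def, hiJ, hiP]
    calc M = ∑ i ∈ J, |h0 i| + ∑ i ∈ Jᶜ, |h0 i| := (Finset.sum_add_sum_compl J _).symm
      _ = ∑ i ∈ Jᶜ, |h0 i| := by rw [Finset.sum_eq_zero h1, zero_add]
      _ ≤ ∑ i ∈ Jᶜ, |w i| := Finset.sum_le_sum h2
      _ ≤ μ := htail
  -- N (A v)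
  have hAsub : A.mulVec v = (A.mulVec w - y) - (A.mulVec x - y) - A.mulVec h0 := by
    have hv : v = (w - x) - h0 := by funext i; simp [hvdef]
    rw [hv, Matrix.mulVec_sub, Matrix.mulVec_sub]
    abel
  have hAh : N (A.mulVec h0) ≤ α * M := by
    have hrepr : A.mulVec h0 = ∑ j, h0 j • (fun k => A k j) := by
      funext k
      simp [Matrix.mulVec, dotProduct, Finset.sum_apply, mul_comm]
    rw [hrepr]
    calc N (∑ j, h0 j • (fun k => A k j)) ≤ ∑ j, N (h0 j • fun k => A k j) :=
          myN_sum hN _ _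
      _ = ∑ j, |h0 j| * N (fun k => A k j) := by
          refine Finset.sum_congr rfl fun j _ => ?_
          exact hN.2.1 _ _
      _ ≤ ∑ j, |h0 j| * α :=
          Finset.sum_le_sum fun j _ => mul_le_mul_of_nonneg_left (hcol j) (abs_nonneg _)
      _ = α * M := by rw [hMdef, Finset.mul_sum]; exact Finset.sum_congr rfl fun j _ => mul_comm _ _
  have hAv : N (A.mulVec v) ≤ ε + δ + α * M := by
    rw [hAsub]
    have t1 := myN_sub hN ((A.mulVec w - y) - (A.mulVec x - y)) (A.mulVec h0)
    have t2 := myN_sub hN (A.mulVec w - y) (A.mulVec x - y)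
    linarith
  -- sign condition
  have hsign : ∀ i ∈ Pplus \ J', v i ≤ 0 := by
    intro i hi
    obtain ⟨hiP, hiJ'⟩ := Finset.mem_sdiff.mp hi
    by_cases hiJ : i ∈ J
    · have hxw : ¬ (x i ≤ w i ∨ i ∉ Pplus) := fun hc =>
        hiJ' (Finset.mem_filter.mpr ⟨hiJ, hc⟩)
      push_neg at hxw
      simp only [hvdef, hh0def, if_pos hiJ]
      have := hxw.1
      linarith
    · simp only [hvdef, hh0def, if_neg hiJ, if_pos hiP]
      have := le_max_left (w i - x i) (0:ℝ)
      linarith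
  have hSGapp := hSG J' hJ'card v hsign
  set L := ∑ i ∈ J' ∩ Pplus, v i + ∑ i ∈ J' ∩ Pplusᶜ, |v i| with hLdef
  set T := ∑ i ∈ J'ᶜ, |v i| with hTdef
  -- splitting helper
  have hsplit : ∀ f : Fin n → ℝ,
      ∑ i, f i = ∑ i ∈ J' ∩ Pplus, f i + ∑ i ∈ J' ∩ Pplusᶜ, f i + ∑ i ∈ J'ᶜ, f i := by
    intro f
    have h1 : ∑ i ∈ J', f i + ∑ i ∈ J'ᶜ, f i = ∑ i, f i :=
      Finset.sum_add_sum_compl J' f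
    have h2 : ∑ i ∈ J'.filter (· ∈ Pplus), f i + ∑ i ∈ J'.filter (· ∉ Pplus), f i
        = ∑ i ∈ J', f i := Finset.sum_filter_add_sum_filter_not J' _ f
    have h3 : J'.filter (· ∈ Pplus) = J' ∩ Pplus := by
      ext i; simp [Finset.mem_filter, Finset.mem_inter]
    have h4 : J'.filter (· ∉ Pplus) = J' ∩ Pplusᶜ := by
      ext i; simp [Finset.mem_filter, Finset.mem_inter]
    rw [h3, h4] at h2
    linarith
  -- region facts
  have hreg1 : ∀ i ∈ J' ∩ Pplus, v i = w i - x i ∧ x i ≤ w i := by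
    intro i hi
    obtain ⟨hiJ', hiP⟩ := Finset.mem_inter.mp hi
    have h0i := hh0J' i hiJ'
    have hfil := (Finset.mem_filter.mp hiJ').2
    have hxw : x i ≤ w i := hfil.resolve_right (fun hc => hc hiP)
    exact ⟨by simp [hvdef, h0i], hxw⟩
  have hreg2 : ∀ i ∈ J', v i = w i - x i := by
    intro i hi; simp [hvdef, hh0J' i hi]
  have hreg3 : ∀ i ∈ J'ᶜ, |v i| ≤ |x i| - |w i| + |h0 i| := by
    intro i hi
    have hiJ' : i ∉ J' := Finset.mem_compl.mp hi
    by_cases hiJ : i ∈ J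
    · -- i ∈ J \ J' : i ∈ Pplus and w i < x i
      have hxw : ¬ (x i ≤ w i ∨ i ∉ Pplus) := fun hc =>
        hiJ' (Finset.mem_filter.mpr ⟨hiJ, hc⟩)
      push_neg at hxw
      obtain ⟨hwx, hiP⟩ := hxw
      have hwi : 0 ≤ w i := hw i hiP
      have hxi : 0 ≤ x i := hx i hiP
      simp only [hvdef, hh0def, if_pos hiJ]
      rw [abs_of_nonneg hwi, abs_of_nonneg hxi, abs_of_nonpos (by linarith : w i - x i - 0 ≤ 0)]
      simp
    · by_cases hiP : i ∈ Pplus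
      · have hwi : 0 ≤ w i := hw i hiP
        have hxi : 0 ≤ x i := hx i hiP
        simp only [hvdef, hh0def, if_neg hiJ, if_pos hiP]
        rcases le_total (w i) (x i) with hle | hle
        · rw [max_eq_right (by linarith : w i - x i ≤ 0),
            abs_of_nonpos (by linarith : w i - x i - 0 ≤ 0),
            abs_of_nonneg hwi, abs_of_nonneg hxi]
          simp
        · rw [max_eq_left (by linarith : (0:ℝ) ≤ w i - x i)]
          rw [abs_of_nonpos (by linarith : w i - x i - (w i - x i) ≤ 0),
            abs_of_nonneg hwi, abs_of_nonneg hxi,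
            abs_of_nonneg (by linarith : (0:ℝ) ≤ w i - x i)]
          linarith
      · simp only [hvdef, hh0def, if_neg hiJ, if_neg hiP]
        have h1 : w i - x i - w i = -x i := by ring
        rw [h1, abs_neg]
        linarith
  -- key optimality
  have key1 : ∑ i, |x i| ≤ (∑ i, |w i|) + ν := by
    have hmem : (∑ i, |w i|) ∈ {r : ℝ | ∃ z : Fin n → ℝ,
        N (A.mulVec z - y) ≤ ε ∧ (∀ i ∈ Pplus, 0 ≤ z i) ∧ r = ∑ i, |z i|} :=
      ⟨w, hε, hw, rfl⟩
    have hbdd : BddBelow {r : ℝ | ∃ z : Fin n → ℝ,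
        N (A.mulVec z - y) ≤ ε ∧ (∀ i ∈ Pplus, 0 ≤ z i) ∧ r = ∑ i, |z i|} := by
      refine ⟨0, fun r hr => ?_⟩
      obtain ⟨z, _, _, hz⟩ := hr
      rw [hz]
      positivity
    have := csInf_le hbdd hmem
    linarith
  have e4 : ∑ i ∈ J'ᶜ, |h0 i| ≤ M :=
    Finset.sum_le_sum_of_subset_of_nonneg (Finset.subset_univ _)
      (fun i _ _ => abs_nonneg _)
  -- Claim B
  have hB : T ≤ ν + L + M := by
    have e1 : ∑ i ∈ J' ∩ Pplus, (|w i| - |x i|) = ∑ i ∈ J' ∩ Pplus, v i := by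
      refine Finset.sum_congr rfl fun i hi => ?_
      obtain ⟨hv, hxw⟩ := hreg1 i hi
      have hiP := (Finset.mem_inter.mp hi).2
      rw [hv, abs_of_nonneg (hw i hiP), abs_of_nonneg (hx i hiP)]
    have e2 : ∑ i ∈ J' ∩ Pplusᶜ, (|w i| - |x i|) ≤ ∑ i ∈ J' ∩ Pplusᶜ, |v i| := by
      refine Finset.sum_le_sum fun i hi => ?_
      rw [hreg2 i (Finset.mem_inter.mp hi).1]
      have := abs_sub_abs_le_abs_sub (w i) (x i)
      linarith
    have e3 : ∑ i ∈ J'ᶜ, |v i| ≤ ∑ i ∈ J'ᶜ, (|x i| - |w i| + |h0 i|) :=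
      Finset.sum_le_sum hreg3
    rw [Finset.sum_sub_distrib] at e1 e2
    have e3' : ∑ i ∈ J'ᶜ, (|x i| - |w i| + |h0 i|)
        = ∑ i ∈ J'ᶜ, |x i| - ∑ i ∈ J'ᶜ, |w i| + ∑ i ∈ J'ᶜ, |h0 i| := by
      rw [Finset.sum_add_distrib, Finset.sum_sub_distrib]
    rw [e3'] at e3
    have hsx := hsplit (fun i => |x i|)
    have hsw := hsplit (fun i => |w i|)
    simp only [hTdef, hLdef]
    linarith
  -- Claim C
  have hC : ∑ i, |x i - w i| ≤ L + T + M := by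
    rw [hsplit (fun i => |x i - w i|)]
    have f1 : ∑ i ∈ J' ∩ Pplus, |x i - w i| = ∑ i ∈ J' ∩ Pplus, v i := by
      refine Finset.sum_congr rfl fun i hi => ?_
      obtain ⟨hv, hxw⟩ := hreg1 i hi
      rw [hv, abs_sub_comm, abs_of_nonneg (by linarith : (0:ℝ) ≤ w i - x i)]
    have f2 : ∑ i ∈ J' ∩ Pplusᶜ, |x i - w i| = ∑ i ∈ J' ∩ Pplusᶜ, |v i| := by
      refine Finset.sum_congr rfl fun i hi => ?_
      rw [hreg2 i (Finset.mem_inter.mp hi).1, abs_sub_comm]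
    have f3 : ∑ i ∈ J'ᶜ, |x i - w i| ≤ T + M := by
      have g1 : ∀ i ∈ J'ᶜ, |x i - w i| ≤ |v i| + |h0 i| := by
        intro i _
        have : x i - w i = -(v i + h0 i) := by simp only [hvdef]; ring
        rw [this, abs_neg]
        exact abs_add_le _ _
      calc ∑ i ∈ J'ᶜ, |x i - w i| ≤ ∑ i ∈ J'ᶜ, (|v i| + |h0 i|) := Finset.sum_le_sum g1
        _ = ∑ i ∈ J'ᶜ, |v i| + ∑ i ∈ J'ᶜ, |h0 i| := Finset.sum_add_distrib
        _ ≤ T + M := by rw [hTdef]; linarith [e4]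
    rw [f1, f2]
    linarith
  -- final arithmetic
  have h1ξ : (0:ℝ) < 1 - ξ := by linarith
  have hξT : ξ * T ≤ ξ * (ν + L + M) := mul_le_mul_of_nonneg_left hB (le_of_lt hξ0)
  have hβN : β * N (A.mulVec v) ≤ β * (ε + δ + α * M) := mul_le_mul_of_nonneg_left hAv hβ
  have hLbd : (1 - ξ) * L ≤ β * (ε + δ) + β * α * M + ξ * ν + ξ * M := by linarith
  have hfin : (1 - ξ) * (∑ i, |x i - w i|)
      ≤ 2*β*(ε+δ) + (1+ξ)*ν + 2*(1+β*α)*M := by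
    have h2 : (1-ξ) * (∑ i, |x i - w i|) ≤ (1-ξ) * (2*L + ν + 2*M) := by
      apply mul_le_mul_of_nonneg_left _ (le_of_lt h1ξ)
      linarith
    linarith
  have hMfin : 2*(1+β*α)*M ≤ 2*(1+β*α)*μ := by
    apply mul_le_mul_of_nonneg_left hMμ
    linarith [mul_nonneg hβ hα0]
  have hgoal : (1 + ξ) / (1 - ξ) * ν + 2 * (1 + β * α) / (1 - ξ) * μ
      + 2 * β / (1 - ξ) * (ε + δ)
      = (2*β*(ε+δ) + (1+ξ)*ν + 2*(1+β*α)*μ) / (1-ξ) := by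
    field_simp
    ring
  rw [hgoal, le_div_iff₀ h1ξ]
  linarith
end
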